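/- arXiv:2106.02628 — 15 statements merged into one kernel-verified Lean document; each statement's English description precedes it below -/
import Mathlib

section
/- Soundness and Completeness of the k-safety encoding C_S (Theorem 1): Let k ≥ 1 and let P_1, …, P_k be programs on state spaces σ_1, …, σ_k with pre- and post-relations pre, post on k-tuples of states. Then the programs satisfy the k-safety property with respect to (pre, post) if and only if the constraint set C_S has a semantic solution, i.e., there exist a predicate inv on k-tuples and predicates sch_A on k-tuples for every nonempty A ⊆ {1, …, k} satisfying clauses (1)–(5) of C_S. -/
/-- `Reach T F v v'`: there is a finite execution of the program `(T, F)`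
from `v` ending in the final state `v'`. -/
def Reach {σ : Type*} (T : σ → σ → Prop) (F : σ → Prop) (v v' : σ) : Prop :=
  ∃ (n : ℕ) (u : ℕ → σ), u 0 = v ∧ (∀ j < n, T (u j) (u (j + 1))) ∧ u n = v' ∧ F v'

lemma Reach.step {σ : Type*} {T : σ → σ → Prop} {F : σ → Prop} {a b c : σ}
    (h : T a b) (hr : Reach T F b c) : Reach T F a c := by
  obtain ⟨n, u, h0, hs, hn, hF⟩ := hr
  refine ⟨n + 1, fun j => if j = 0 then a else u (j - 1), by simp, ?_, by simp [hn], hF⟩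
  intro j hj
  rcases Nat.eq_zero_or_pos j with rfl | hpos
  · simpa [h0] using h
  · have h1 : ¬ (j = 0) := by omega
    have h2 : ¬ (j + 1 = 0) := by omega
    simp only [h1, h2, if_false]
    have : j - 1 < n := by omega
    have := hs (j - 1) this
    have hj1 : j - 1 + 1 = j + 1 - 1 := by omega
    rwa [hj1] at this

/-- Theorem 1 (Soundness and Completeness of the k-safety encoding C_S). -/
theorem ksafety_encoding_sound_and_complete
    {k : ℕ} (hk : 1 ≤ k) {σ : Fin k → Type*}
    (T : ∀ i, σ i → σ i → Prop) (F : ∀ i, σ i → Prop)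
    (hFinFix : ∀ i v v', F i v → T i v v' → v' = v)
    (hFinLoop : ∀ i v, F i v → T i v v)
    (pre post : (∀ i, σ i) → Prop) :
    (∀ v v' : ∀ i, σ i, pre v → (∀ i, Reach (T i) (F i) (v i) (v' i)) → post v')
    ↔
    ∃ (inv : (∀ i, σ i) → Prop) (sch : Set (Fin k) → (∀ i, σ i) → Prop),
      -- (1)
      (∀ x, pre x → inv x) ∧
      -- (2)
      (∀ x, inv x → (∀ i, F i (x i)) → post x) ∧
      -- (3)
      (∀ A : Set (Fin k), A.Nonempty → ∀ x x' : ∀ i, σ i,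
        inv x → sch A x → (∀ i ∈ A, T i (x i) (x' i)) → (∀ i ∉ A, x' i = x i) →
        inv x') ∧
      -- (4)
      (∀ A : Set (Fin k), A.Nonempty → ∀ x : ∀ i, σ i,
        inv x → sch A x → (∃ i, ¬ F i (x i)) → ∃ i ∈ A, ¬ F i (x i)) ∧
      -- (5)
      (∀ x : ∀ i, σ i, inv x → (∃ i, ¬ F i (x i)) →
        ∃ A : Set (Fin k), A.Nonempty ∧ sch A x) := by
  classical
  constructor
  · -- completeness: k-safety → solution
    intro hsafe
    refine ⟨fun x => ∀ x', (∀ i, Reach (T i) (F i) (x i) (x' i)) → post x',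
      fun A _ => A = Set.univ, ?_, ?_, ?_, ?_, ?_⟩
    · intro x hx; exact fun x' hr => hsafe x x' hx hr
    · intro x hinv hF
      exact hinv x (fun i => ⟨0, fun _ => x i, rfl, fun j hj => by omega, rfl, hF i⟩)
    · intro A hA x x' hinv hsch hT _
      intro y hy
      apply hinv
      intro i
      have hi : i ∈ A := hsch ▸ Set.mem_univ i
      exact Reach.step (hT i hi) (hy i)
    · rintro A hA x _ hsch ⟨i, hi⟩
      exact ⟨i, hsch ▸ Set.mem_univ i, hi⟩
    · intro x _ _
      exact ⟨Set.univ, ⟨⟨0, hk⟩, trivial⟩, rfl⟩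
  · -- soundness: solution → k-safety
    rintro ⟨inv, sch, h1, h2, h3, h4, h5⟩ v v' hpre hreach
    choose n u h0 hstep hn hF using hreach
    -- a final state stays fixed along the run
    have stay : ∀ i d p, p + d ≤ n i → F i (u i p) → u i (p + d) = u i p := by
      intro i d
      induction d with
      | zero => intro p _ _; rfl
      | succ d ih =>
        intro p hle hFp
        have hs1 : u i (p + 1) = u i p :=
          hFinFix i _ _ hFp (hstep i p (by omega))
        have := ih (p + 1) (by omega) (by rwa [hs1])
        have harr : p + (d + 1) = (p + 1) + d := by omega
        rw [harr, this, hs1]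
    have main : ∀ m (p : ∀ i, ℕ), (∀ i, p i ≤ n i) →
        (∑ i, (n i - p i)) = m → inv (fun i => u i (p i)) → post v' := by
      intro m
      induction m using Nat.strong_induction_on with
      | _ m ih =>
        intro p hple hm hinv
        by_cases hfin : ∀ i, F i (u i (p i))
        · have hx : (fun i => u i (p i)) = v' := by
            funext i
            have h := stay i (n i - p i) (p i) (by have := hple i; omega) (hfin i)
            have : p i + (n i - p i) = n i := by have := hple i; omega
            rw [this] at h
            rw [← hn i, h]
          have := h2 _ hinv hfin
          rwa [hx] at this
        · push_neg at hfin
          obtain ⟨A, hA, hsch⟩ := h5 _ hinv hfin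
          set p' : ∀ i : Fin k, ℕ := fun i => if i ∈ A ∧ p i < n i then p i + 1 else p i
            with hp'
          have hfinal_at_n : ∀ i : Fin k, p i = n i → F i (u i (p i)) := by
            intro i hpi
            rw [hpi, hn i]
            exact hF i
          have hinv' : inv (fun i => u i (p' i)) := by
            apply h3 A hA _ _ hinv hsch
            · intro i hiA
              by_cases hlt : p i < n i
              · have : p' i = p i + 1 := by simp [hp', hiA, hlt]
                rw [this]
                exact hstep i (p i) hlt
              · have hpn : p i = n i := by have := hple i; omega
                have : p' i = p i := by simp [hp', hlt]
                rw [this]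
                exact hFinLoop i _ (hfinal_at_n i hpn)
            · intro i hiA
              have : p' i = p i := by simp [hp', hiA]
              rw [this]
          have hple' : ∀ i, p' i ≤ n i := by
            intro i
            by_cases h : i ∈ A ∧ p i < n i
            · simp [hp', h]
            · simp [hp', h]; exact hple i
          have hlt : (∑ i, (n i - p' i)) < m := by
            obtain ⟨i₀, hi₀A, hi₀F⟩ := h4 A hA _ hinv hsch hfin
            have hi₀lt : p i₀ < n i₀ := by
              rcases lt_or_eq_of_le (hple i₀) with h' | h'
              · exact h'
              · exact absurd (hfinal_at_n i₀ h') hi₀F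
            rw [← hm]
            refine Finset.sum_lt_sum ?_ ⟨i₀, Finset.mem_univ i₀, ?_⟩
            · intro i _
              by_cases h : i ∈ A ∧ p i < n i
              · simp [hp', h]; omega
              · simp [hp', h]
            · have : p' i₀ = p i₀ + 1 := by simp [hp', hi₀A, hi₀lt]
              omega
          exact ih _ hlt p' hple' rfl hinv'
    have hinv0 : inv (fun i => u i 0) := by
      have : (fun i => u i 0) = v := funext fun i => h0 i
      rw [this]
      exact h1 v hpre
    exact main (∑ i, (n i - 0)) (fun _ => 0) (fun i => Nat.zero_le _) rfl hinv0
end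

section
/- Soundness and Completeness of the co-termination encoding C_CoT (Theorem 2): Let P_1 = (T_1, F_1) and P_2 = (T_2, F_2) be programs on σ_1 and σ_2 and pre a predicate on σ_1 × σ_2. Then P_1, P_2 satisfy co-termination with respect to pre if and only if the constraint set C_CoT has a semantic solution, i.e., there exist predicates inv, sch_TT, sch_FT, sch_TF on ℤ × ℤ × σ_1 × σ_2, a function fnbnd : σ_1 × σ_2 → ℤ, and a well-founded relation wfr on σ_2 satisfying clauses (1)–(6) of C_CoT. -/
/-- `Diverge T F v`: there is an infinite non-final execution of `(T, F)` from `v`. -/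
def Diverge {σ : Type*} (T : σ → σ → Prop) (F : σ → Prop) (v : σ) : Prop :=
  ∃ u : ℕ → σ, u 0 = v ∧ (∀ j, T (u j) (u (j + 1))) ∧ (∀ j, ¬ F (u j))

/-- A relation is well-founded in the paper's sense: no infinite chain. -/
def NoInfChain {τ : Type*} (W : τ → τ → Prop) : Prop :=
  ¬ ∃ v : ℕ → τ, ∀ j, W (v j) (v (j + 1))

lemma Reach.prepend {σ : Type*} {T : σ → σ → Prop} {F : σ → Prop} {x x' v : σ}
    (hT : T x x') (h : Reach T F x' v) : Reach T F x v := by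
  obtain ⟨n, u, h0, hstep, hn, hF⟩ := h
  refine ⟨n + 1, fun j => match j with | 0 => x | (m + 1) => u m, rfl, ?_, hn, hF⟩
  intro j hj
  match j with
  | 0 => simpa [h0] using hT
  | (m + 1) => exact hstep m (by omega)

lemma Diverge.prepend {σ : Type*} {T : σ → σ → Prop} {F : σ → Prop} {x x' : σ}
    (hT : T x x') (hF : ¬ F x) (h : Diverge T F x') : Diverge T F x := by
  obtain ⟨u, h0, hstep, hnf⟩ := h
  refine ⟨fun j => match j with | 0 => x | (m + 1) => u m, rfl, ?_, ?_⟩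
  · intro j
    match j with
    | 0 => simpa [h0] using hT
    | (m + 1) => exact hstep m
  · intro j
    match j with
    | 0 => exact hF
    | (m + 1) => exact hnf m

/-- Theorem 2 (Soundness and Completeness of the co-termination encoding C_CoT). -/
theorem coterm_encoding_sound_and_complete
    {σ₁ σ₂ : Type*}
    (T₁ : σ₁ → σ₁ → Prop) (F₁ : σ₁ → Prop)
    (T₂ : σ₂ → σ₂ → Prop) (F₂ : σ₂ → Prop)
    (hFinFix₁ : ∀ v v', F₁ v → T₁ v v' → v' = v) (hFinLoop₁ : ∀ v, F₁ v → T₁ v v)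
    (hFinFix₂ : ∀ v v', F₂ v → T₂ v v' → v' = v) (hFinLoop₂ : ∀ v, F₂ v → T₂ v v)
    (pre : σ₁ → σ₂ → Prop) :
    (∀ v₁ v₂ v₁', pre v₁ v₂ → Reach T₁ F₁ v₁ v₁' → ¬ Diverge T₂ F₂ v₂)
    ↔
    ∃ (inv schTT schFT schTF : ℤ → ℤ → σ₁ → σ₂ → Prop)
      (fnbnd : σ₁ → σ₂ → ℤ) (wfr : σ₂ → σ₂ → Prop),
      NoInfChain wfr ∧
      -- (1)
      (∀ x₁ x₂, pre x₁ x₂ → inv 0 (fnbnd x₁ x₂) x₁ x₂) ∧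
      -- (2)
      (∀ d b x₁ x₂, inv d b x₁ x₂ → ¬ F₁ x₁ → ¬ F₂ x₂ →
        (-b ≤ d ∧ d ≤ b ∧ b ≥ 0)) ∧
      -- (3a)
      (∀ d d' b x₁ x₂ x₂', inv d b x₁ x₂ → schFT d b x₁ x₂ → T₂ x₂ x₂' →
        (F₁ x₁ ∨ F₂ x₂ ∨ d' = d - 1) → inv d' b x₁ x₂') ∧
      -- (3b)
      (∀ d d' b x₁ x₁' x₂, inv d b x₁ x₂ → schTF d b x₁ x₂ → T₁ x₁ x₁' →
        (F₁ x₁ ∨ F₂ x₂ ∨ d' = d + 1) → inv d' b x₁' x₂) ∧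
      -- (3c)
      (∀ d b x₁ x₁' x₂ x₂', inv d b x₁ x₂ → schTT d b x₁ x₂ → T₁ x₁ x₁' →
        T₂ x₂ x₂' → inv d b x₁' x₂') ∧
      -- (4a)
      (∀ d b x₁ x₂, inv d b x₁ x₂ → schFT d b x₁ x₂ → ¬ F₁ x₁ → ¬ F₂ x₂) ∧
      -- (4b)
      (∀ d b x₁ x₂, inv d b x₁ x₂ → schTF d b x₁ x₂ → ¬ F₂ x₂ → ¬ F₁ x₁) ∧
      -- (5)
      (∀ d b x₁ x₂, inv d b x₁ x₂ → (¬ F₁ x₁ ∨ ¬ F₂ x₂) →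
        schTT d b x₁ x₂ ∨ schFT d b x₁ x₂ ∨ schTF d b x₁ x₂) ∧
      -- (6)
      (∀ d b x₁ x₂ x₂', inv d b x₁ x₂ → F₁ x₁ → ¬ F₂ x₂ → T₂ x₂ x₂' →
        wfr x₂ x₂') := by
  constructor
  · -- Completeness: from co-termination, build a solution.
    intro hco
    refine ⟨fun d b x₁ x₂ => d = 0 ∧ b = 0 ∧
        (∀ v₁', Reach T₁ F₁ x₁ v₁' → ¬ Diverge T₂ F₂ x₂),
      fun _ _ _ _ => True, fun _ _ _ _ => False, fun _ _ _ _ => False,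
      fun _ _ => 0,
      fun x₂ x₂' => T₂ x₂ x₂' ∧ ¬ F₂ x₂ ∧ ¬ Diverge T₂ F₂ x₂,
      ?_, ?_, ?_, ?_, ?_, ?_, ?_, ?_, ?_, ?_⟩
    · rintro ⟨v, hv⟩
      exact (hv 0).2.2 ⟨v, rfl, fun j => (hv j).1, fun j => (hv j).2.1⟩
    · exact fun x₁ x₂ hpre => ⟨rfl, rfl, fun v₁' hr => hco x₁ x₂ v₁' hpre hr⟩
    · rintro d b x₁ x₂ ⟨rfl, rfl, -⟩ _ _; norm_num
    · rintro d d' b x₁ x₂ x₂' _ hsch; exact hsch.elim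
    · rintro d d' b x₁ x₁' x₂ _ hsch; exact hsch.elim
    · rintro d b x₁ x₁' x₂ x₂' ⟨rfl, rfl, hQ⟩ - hT1 hT2
      refine ⟨rfl, rfl, fun v₁' hr hdiv => ?_⟩
      by_cases hF2 : F₂ x₂
      · obtain ⟨uu, h0, -, hnf⟩ := hdiv
        exact hnf 0 (by rw [h0, hFinFix₂ _ _ hF2 hT2]; exact hF2)
      · exact hQ v₁' (Reach.prepend hT1 hr) (Diverge.prepend hT2 hF2 hdiv)
    · rintro d b x₁ x₂ _ hsch; exact hsch.elim
    · rintro d b x₁ x₂ _ hsch; exact hsch.elim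
    · intro d b x₁ x₂ _ _; exact Or.inl trivial
    · rintro d b x₁ x₂ x₂' ⟨-, -, hQ⟩ hF1 hnF2 hT2
      exact ⟨hT2, hnF2, hQ x₁ ⟨0, fun _ => x₁, rfl,
        fun j hj => absurd hj (Nat.not_lt_zero j), rfl, hF1⟩⟩
  · -- Soundness: from a solution, derive co-termination.
    rintro ⟨inv, schTT, schFT, schTF, fnbnd, wfr, hwf, h1, h2, h3a, h3b, h3c,
      h4a, h4b, h5, h6⟩ v₁ v₂ v₁' hpre hreach hdiv
    classical
    obtain ⟨n, u, hu0, huT, hun, hufin⟩ := hreach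
    obtain ⟨w, hw0, hwT, hwF⟩ := hdiv
    obtain ⟨b, hb⟩ : ∃ b, b = fnbnd v₁ v₂ := ⟨_, rfl⟩
    -- extended first run, self-looping at the final state
    obtain ⟨u', hu'0, hu'T, hu'fin⟩ :
        ∃ u' : ℕ → σ₁, u' 0 = v₁ ∧ (∀ j, T₁ (u' j) (u' (j + 1))) ∧ F₁ (u' n) := by
      refine ⟨fun j => u (min j n), by simp [hu0], ?_, by simpa [hun] using hufin⟩
      intro j
      by_cases hj : j < n
      · have e1 : min j n = j := by omega
        have e2 : min (j + 1) n = j + 1 := by omega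
        simp only [e1, e2]
        exact huT j hj
      · have e1 : min j n = n := by omega
        have e2 : min (j + 1) n = n := by omega
        simp only [e1, e2, hun]
        exact hFinLoop₁ _ hufin
    have hpers : ∀ j, F₁ (u' j) → F₁ (u' (j + 1)) := by
      intro j hF
      rw [hFinFix₁ _ _ hF (hu'T j)]
      exact hF
    -- the scheduled product run
    obtain ⟨step, hstep⟩ : ∃ step : ℤ × ℕ × ℕ → ℤ × ℕ × ℕ, ∀ s,
        step s = if schTT s.1 b (u' s.2.1) (w s.2.2) then (s.1, s.2.1 + 1, s.2.2 + 1)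
          else if schFT s.1 b (u' s.2.1) (w s.2.2) then (s.1 - 1, s.2.1, s.2.2 + 1)
          else (s.1 + 1, s.2.1 + 1, s.2.2) :=
      ⟨fun s => if schTT s.1 b (u' s.2.1) (w s.2.2) then (s.1, s.2.1 + 1, s.2.2 + 1)
          else if schFT s.1 b (u' s.2.1) (w s.2.2) then (s.1 - 1, s.2.1, s.2.2 + 1)
          else (s.1 + 1, s.2.1 + 1, s.2.2), fun s => rfl⟩
    obtain ⟨run, hrun0, hrunS⟩ : ∃ run : ℕ → ℤ × ℕ × ℕ,
        run 0 = (0, 0, 0) ∧ ∀ j, run (j + 1) = step (run j) :=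
      ⟨fun j => step^[j] (0, 0, 0), rfl, fun j => Function.iterate_succ_apply' step j _⟩
    have hinv : ∀ j, inv (run j).1 b (u' (run j).2.1) (w (run j).2.2) := by
      intro j
      induction j with
      | zero =>
        rw [hrun0]
        show inv 0 b (u' 0) (w 0)
        rw [hu'0, hw0, hb]
        exact h1 v₁ v₂ hpre
      | succ j ih =>
        rw [hrunS j, hstep]
        by_cases hTT : schTT (run j).1 b (u' (run j).2.1) (w (run j).2.2)
        · rw [if_pos hTT]
          exact h3c _ _ _ _ _ _ ih hTT (hu'T _) (hwT _)
        · rw [if_neg hTT]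
          by_cases hFT : schFT (run j).1 b (u' (run j).2.1) (w (run j).2.2)
          · rw [if_pos hFT]
            exact h3a _ _ _ _ _ _ ih hFT (hwT _) (Or.inr (Or.inr rfl))
          · rw [if_neg hFT]
            have hTF : schTF (run j).1 b (u' (run j).2.1) (w (run j).2.2) := by
              rcases h5 _ _ _ _ ih (Or.inr (hwF _)) with h | h | h
              · exact absurd h hTT
              · exact absurd h hFT
              · exact h
            exact h3b _ _ _ _ _ _ ih hTF (hu'T _) (Or.inr (Or.inr rfl))
    have hbranch : ∀ j,
        ((run (j + 1)).1 = (run j).1 ∧ (run (j + 1)).2.1 = (run j).2.1 + 1 ∧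
          (run (j + 1)).2.2 = (run j).2.2 + 1)
        ∨ ((run (j + 1)).1 = (run j).1 - 1 ∧ (run (j + 1)).2.1 = (run j).2.1 ∧
            (run (j + 1)).2.2 = (run j).2.2 + 1)
        ∨ (schTF (run j).1 b (u' (run j).2.1) (w (run j).2.2) ∧
            (run (j + 1)).1 = (run j).1 + 1 ∧ (run (j + 1)).2.1 = (run j).2.1 + 1 ∧
            (run (j + 1)).2.2 = (run j).2.2) := by
      intro j
      rw [hrunS j, hstep]
      by_cases hTT : schTT (run j).1 b (u' (run j).2.1) (w (run j).2.2)
      · rw [if_pos hTT]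
        exact Or.inl ⟨rfl, rfl, rfl⟩
      · rw [if_neg hTT]
        by_cases hFT : schFT (run j).1 b (u' (run j).2.1) (w (run j).2.2)
        · rw [if_pos hFT]
          exact Or.inr (Or.inl ⟨rfl, rfl, rfl⟩)
        · rw [if_neg hFT]
          refine Or.inr (Or.inr ⟨?_, rfl, rfl, rfl⟩)
          rcases h5 _ _ _ _ (hinv j) (Or.inr (hwF _)) with h | h | h
          · exact absurd h hTT
          · exact absurd h hFT
          · exact h
    have hDIK : ∀ j, (run j).1 = ((run j).2.1 : ℤ) - ((run j).2.2 : ℤ) ∧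
        j ≤ (run j).2.1 + (run j).2.2 := by
      intro j
      induction j with
      | zero => rw [hrun0]; simp
      | succ j ih =>
        obtain ⟨ih1, ih2⟩ := ih
        rcases hbranch j with ⟨e1, e2, e3⟩ | ⟨e1, e2, e3⟩ | ⟨-, e1, e2, e3⟩ <;>
          rw [e1, e2, e3] <;> constructor <;> [skip; omega; skip; omega; skip; omega] <;>
          push_cast <;> omega
    by_cases hA : ∃ m, F₁ (u' ((run m).2.1))
    · -- the first program's component is eventually final: use the wf relation
      obtain ⟨m, hm⟩ := hA
      have hFA : ∀ t, F₁ (u' ((run (m + t)).2.1)) := by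
        intro t
        induction t with
        | zero => exact hm
        | succ t ih =>
          have e : m + (t + 1) = (m + t) + 1 := rfl
          rw [e]
          rcases hbranch (m + t) with ⟨-, e2, -⟩ | ⟨-, e2, -⟩ | ⟨-, -, e2, -⟩ <;> rw [e2]
          · exact hpers _ ih
          · exact ih
          · exact hpers _ ih
      have hK : ∀ t, (run (m + t)).2.2 = (run m).2.2 + t := by
        intro t
        induction t with
        | zero => rfl
        | succ t ih =>
          have e : m + (t + 1) = (m + t) + 1 := rfl
          rw [e]
          rcases hbranch (m + t) with ⟨-, -, e3⟩ | ⟨-, -, e3⟩ | ⟨hTF, -, -, e3⟩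
          · omega
          · omega
          · exact absurd (hFA t) (h4b _ _ _ _ (hinv (m + t)) hTF (hwF _))
      refine hwf ⟨fun t => w ((run m).2.2 + t), fun t => ?_⟩
      have h₆ := h6 _ _ _ _ _ (hinv (m + t)) (hFA t) (hwF _) (hwT ((run (m + t)).2.2))
      rw [hK t] at h₆
      exact h₆
    · -- the first component is never final: the balance d drops below -b
      push_neg at hA
      have hIle : ∀ j, (run j).2.1 ≤ n := by
        intro j
        induction j with
        | zero => rw [hrun0]; exact Nat.zero_le n
        | succ j ih =>
          have hne : (run j).2.1 ≠ n := fun he => hA j (by rw [he]; exact hu'fin)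
          rcases hbranch j with ⟨-, e2, -⟩ | ⟨-, e2, -⟩ | ⟨-, -, e2, -⟩ <;> omega
      obtain ⟨j, hj⟩ : ∃ j : ℕ, j = 2 * n + (b.toNat + 1) := ⟨_, rfl⟩
      obtain ⟨hd1, hd2⟩ := hDIK j
      obtain ⟨hb1, hb2, hb3⟩ := h2 _ _ _ _ (hinv j) (hA j) (hwF _)
      have hIj := hIle j
      omega
end

section
/- Soundness and Completeness of the TI-GNI encoding C_TIGNI (Theorem 3): Under the stated assumptions on U_2 (including totality), P_1, P_2 satisfy termination-insensitive generalized non-interference (TI-GNI) with respect to (pre, post) if and only if the constraint set C_TIGNI has a semantic solution, i.e., there exist predicates inv, sch_1, sch_2, sch_12 on σ_1 × σ_1 × σ_2 and a function fnr : σ_1 × σ_2 → R satisfying clauses (1)–(5) of C_TIGNI. -/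
lemma rtg_of_path {σ : Type*} (T : σ → σ → Prop) :
    ∀ (n : ℕ) (u : ℕ → σ), (∀ j < n, T (u j) (u (j + 1))) →
      Relation.ReflTransGen T (u 0) (u n) := by
  intro n
  induction n with
  | zero => intro u _; exact .refl
  | succ n ih =>
    intro u h
    exact (ih u (fun j hj => h j (by omega))).tail (h n (by omega))

lemma path_of_rtg {σ : Type*} {T : σ → σ → Prop} {a b : σ}
    (h : Relation.ReflTransGen T a b) :
    ∃ (n : ℕ) (u : ℕ → σ), u 0 = a ∧ (∀ j < n, T (u j) (u (j + 1))) ∧ u n = b := by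
  induction h with
  | refl => exact ⟨0, fun _ => a, rfl, by omega, rfl⟩
  | @tail b c hab hbc ih =>
    obtain ⟨n, u, h0, hs, hn⟩ := ih
    refine ⟨n + 1, fun j => if j ≤ n then u j else c, by simpa using h0, ?_, by simp⟩
    intro j hj
    rcases Nat.lt_or_ge j n with hjn | hjn
    · simpa [Nat.le_of_lt hjn, Nat.succ_le_of_lt hjn] using hs j hjn
    · have hje : j = n := by omega
      subst hje
      simpa [hn] using hbc

lemma reach_iff {σ : Type*} (T : σ → σ → Prop) (F : σ → Prop) (v v' : σ) :
    Reach T F v v' ↔ Relation.ReflTransGen T v v' ∧ F v' := by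
  constructor
  · rintro ⟨n, u, h0, hs, hn, hF⟩
    exact ⟨h0 ▸ hn ▸ rtg_of_path T n u hs, hF⟩
  · rintro ⟨h, hF⟩
    obtain ⟨n, u, h0, hs, hn⟩ := path_of_rtg h
    exact ⟨n, u, h0, hs, hn, hF⟩

/-- Theorem 3 (Soundness and Completeness of the TI-GNI encoding C_TIGNI). -/
theorem tigni_encoding_sound_and_complete
    {σ₁ σ₂ : Type*} {R : Type*} [Nonempty R]
    (T₁ : σ₁ → σ₁ → Prop) (F₁ : σ₁ → Prop)
    (T₂ : σ₂ → σ₂ → Prop) (F₂ : σ₂ → Prop)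
    (hFinFix₁ : ∀ v v', F₁ v → T₁ v v' → v' = v) (hFinLoop₁ : ∀ v, F₁ v → T₁ v v)
    (hFinFix₂ : ∀ v v', F₂ v → T₂ v v' → v' = v) (hFinLoop₂ : ∀ v, F₂ v → T₂ v v)
    (pre post : σ₁ → σ₂ → Prop)
    (U₂ : R → σ₂ → σ₂ → Prop)
    (hU₂T : ∀ w w', T₂ w w' ↔ ∃ r, U₂ r w w')
    (hU₂fun : ∀ r w w' w'', U₂ r w w' → U₂ r w w'' → w' = w'')
    (hU₂tot : ∀ r w, ∃ w', U₂ r w w') :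
    (∀ v₁ v₂ v₁', pre v₁ v₂ → Reach T₁ F₁ v₁ v₁' →
      (∃ v₂', Reach T₂ F₂ v₂ v₂' ∧ post v₁' v₂') ∨ Diverge T₂ F₂ v₂)
    ↔
    ∃ (inv sch₁ sch₂ sch₁₂ : σ₁ → σ₁ → σ₂ → Prop) (fnr : σ₁ → σ₂ → R),
      -- (1)
      (∀ p x₁ x₂, pre x₁ x₂ → inv p x₁ x₂) ∧
      -- (2)
      (∀ p x₁ x₂, inv p x₁ x₂ → F₁ x₁ → F₂ x₂ → (p = x₁ → post x₁ x₂)) ∧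
      -- (3₁)
      (∀ p x₁ x₁' x₂, inv p x₁ x₂ → sch₁ p x₁ x₂ → T₁ x₁ x₁' → inv p x₁' x₂) ∧
      -- (3₂)
      (∀ p x₁ x₂ x₂', inv p x₁ x₂ → sch₂ p x₁ x₂ → U₂ (fnr p x₂) x₂ x₂' →
        inv p x₁ x₂') ∧
      -- (3₁₂)
      (∀ p x₁ x₁' x₂ x₂', inv p x₁ x₂ → sch₁₂ p x₁ x₂ → T₁ x₁ x₁' →
        U₂ (fnr p x₂) x₂ x₂' → inv p x₁' x₂') ∧
      -- (4₁)
      (∀ p x₁ x₂, inv p x₁ x₂ → sch₁ p x₁ x₂ → (¬ F₁ x₁ ∨ ¬ F₂ x₂) → ¬ F₁ x₁) ∧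
      -- (4₂)
      (∀ p x₁ x₂, inv p x₁ x₂ → sch₂ p x₁ x₂ → (¬ F₁ x₁ ∨ ¬ F₂ x₂) → ¬ F₂ x₂) ∧
      -- (5)
      (∀ p x₁ x₂, inv p x₁ x₂ → (¬ F₁ x₁ ∨ ¬ F₂ x₂) →
        sch₁ p x₁ x₂ ∨ sch₂ p x₁ x₂ ∨ sch₁₂ p x₁ x₂) := by
  classical
  constructor
  · -- Completeness: TI-GNI ⟹ semantic solution
    intro hgni
    set Q : σ₁ → σ₂ → Prop := fun p x₂ =>
      (∃ v₂', Reach T₂ F₂ x₂ v₂' ∧ post p v₂') ∨ Diverge T₂ F₂ x₂ with hQdef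
    have hfnr_ex : ∀ p x₂, ∃ r : R,
        (Q p x₂ ∧ ¬ F₂ x₂) → ∃ w', U₂ r x₂ w' ∧ Q p w' := by
      intro p x₂
      by_cases h : Q p x₂ ∧ ¬ F₂ x₂
      · obtain ⟨hq, hnF⟩ := h
        rcases hq with ⟨v₂', hr, hpost⟩ | ⟨uu, h0, hs, hnf⟩
        · rw [reach_iff] at hr
          obtain ⟨hrtg, hFv⟩ := hr
          rcases hrtg.cases_head with heq | ⟨wmid, hT, hrtg'⟩
          · exact absurd (heq ▸ hFv) hnF
          · obtain ⟨r, hU⟩ := (hU₂T x₂ wmid).mp hT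
            exact ⟨r, fun _ => ⟨wmid, hU,
              Or.inl ⟨v₂', (reach_iff T₂ F₂ wmid v₂').mpr ⟨hrtg', hFv⟩, hpost⟩⟩⟩
        · have hT : T₂ x₂ (uu 1) := h0 ▸ hs 0
          obtain ⟨r, hU⟩ := (hU₂T x₂ (uu 1)).mp hT
          exact ⟨r, fun _ => ⟨uu 1, hU,
            Or.inr ⟨fun j => uu (j + 1), rfl, fun j => hs (j + 1), fun j => hnf (j + 1)⟩⟩⟩
      · exact ⟨Classical.arbitrary R, fun hh => absurd hh h⟩
    refine ⟨fun p x₁ x₂ => Reach T₁ F₁ x₁ p → Q p x₂,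
      fun p x₁ x₂ => ¬ F₁ x₁,
      fun p x₁ x₂ => F₁ x₁ ∧ ¬ F₂ x₂,
      fun _ _ _ => False,
      fun p x₂ => Classical.choose (hfnr_ex p x₂),
      ?_, ?_, ?_, ?_, ?_, ?_, ?_, ?_⟩
    · intro p x₁ x₂ hpre hr
      exact hgni x₁ x₂ p hpre hr
    · intro p x₁ x₂ hinv hF1 hF2 hpx
      subst hpx
      have hre : Reach T₁ F₁ p p := ⟨0, fun _ => p, rfl, by omega, rfl, hF1⟩
      have hfix : ∀ y, Relation.ReflTransGen T₂ x₂ y → y = x₂ := by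
        intro y hy
        induction hy with
        | refl => rfl
        | tail hab hbc ih =>
          rw [ih] at hbc
          exact hFinFix₂ _ _ hF2 hbc
      rcases hinv hre with ⟨v₂', hr, hpost⟩ | ⟨uu, h0, _, hnf⟩
      · rw [reach_iff] at hr
        exact (hfix v₂' hr.1) ▸ hpost
      · exact absurd (h0 ▸ hF2) (hnf 0)
    · intro p x₁ x₁' x₂ hinv hs hT hr
      apply hinv
      rw [reach_iff] at hr ⊢
      exact ⟨.head hT hr.1, hr.2⟩
    · rintro p x₁ x₂ x₂' hinv ⟨hF1, hnF2⟩ hU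
      intro hr
      have hq := hinv hr
      obtain ⟨w', hU', hq'⟩ := Classical.choose_spec (hfnr_ex p x₂) ⟨hq, hnF2⟩
      exact (hU₂fun _ _ _ _ hU' hU) ▸ hq'
    · intro p x₁ x₁' x₂ x₂' _ hs _ _
      exact hs.elim
    · exact fun p x₁ x₂ _ hs _ => hs
    · exact fun p x₁ x₂ _ hs _ => hs.2
    · intro p x₁ x₂ _ h
      by_cases h1 : F₁ x₁
      · exact Or.inr (Or.inl ⟨h1, h.resolve_left (not_not_intro h1)⟩)
      · exact Or.inl h1
  · -- Soundness: semantic solution ⟹ TI-GNI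
    rintro ⟨inv, sch₁, sch₂, sch₁₂, fnr, h1, h2, h31, h32, h312, h41, h42, h5⟩
    intro v₁ v₂ v₁' hpre hreach
    obtain ⟨n, u₀, hu0, hustep, hun, hF1'⟩ := hreach
    set p := v₁' with hp
    -- the run of P₁, extended by stuttering at the final state
    set u : ℕ → σ₁ := fun i => if i ≤ n then u₀ i else v₁' with hudef
    have hu0' : u 0 = v₁ := by simp [hudef, hu0]
    have huge : ∀ i, n ≤ i → u i = v₁' := by
      intro i hi
      rcases Nat.eq_or_lt_of_le hi with h | h
      · simp [hudef, ← h, hun, hp]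
      · simp [hudef, Nat.not_le.mpr h]
    have hustep' : ∀ i, T₁ (u i) (u (i + 1)) := by
      intro i
      rcases Nat.lt_or_ge i n with hi | hi
      · have h1le : i ≤ n := le_of_lt hi
        have h2le : i + 1 ≤ n := Nat.succ_le_of_lt hi
        have e1 : u i = u₀ i := by simp only [hudef]; rw [if_pos h1le]
        have e2 : u (i + 1) = u₀ (i + 1) := by simp only [hudef]; rw [if_pos h2le]
        rw [e1, e2]
        exact hustep i hi
      · rw [huge i hi, huge (i + 1) (by omega)]
        exact hFinLoop₁ _ hF1'
    have hufin : ∀ i, F₁ (u i) → u i = v₁' := by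
      intro i hF
      rcases Nat.lt_or_ge i n with hi | hi
      · have key : ∀ d, i + d ≤ n → u (i + d) = u i := by
          intro d
          induction d with
          | zero => intro _; rfl
          | succ d ih =>
            intro hd
            have h' := ih (by omega)
            have hstep : T₁ (u i) (u (i + d + 1)) := h' ▸ hustep' (i + d)
            have := hFinFix₁ _ _ hF hstep
            exact this
        have h1 := key (n - i) (by omega)
        have h2 : u (i + (n - i)) = v₁' := by
          rw [show i + (n - i) = n by omega]
          exact huge n le_rfl
        rw [← h1, h2]
      · exact huge i hi
    -- one scheduled step of the product
    set Spec : ℕ × σ₂ → ℕ × σ₂ → Prop := fun c c' =>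
      inv p (u c'.1) c'.2 ∧
      ((F₁ (u c.1) ∧ F₂ c.2 ∧ c' = c)
        ∨ (¬ F₁ (u c.1) ∧ c'.1 = c.1 + 1 ∧ c'.2 = c.2)
        ∨ (T₂ c.2 c'.2 ∧ ¬ F₂ c.2)) with hSpecdef
    have hex : ∀ c : ℕ × σ₂, ∃ c', inv p (u c.1) c.2 → Spec c c' := by
      rintro ⟨i, w⟩
      by_cases hinvc : inv p (u i) w
      swap
      · exact ⟨(i, w), fun h => absurd h hinvc⟩
      by_cases hb : F₁ (u i) ∧ F₂ w
      · exact ⟨(i, w), fun _ => ⟨hinvc, Or.inl ⟨hb.1, hb.2, rfl⟩⟩⟩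
      have hnf : ¬ F₁ (u i) ∨ ¬ F₂ w := by tauto
      rcases h5 p (u i) w hinvc hnf with hs1 | hs2 | hs12
      · have hnF1 := h41 p (u i) w hinvc hs1 hnf
        exact ⟨(i + 1, w), fun _ =>
          ⟨h31 p (u i) (u (i + 1)) w hinvc hs1 (hustep' i), Or.inr (Or.inl ⟨hnF1, rfl, rfl⟩)⟩⟩
      · have hnF2 := h42 p (u i) w hinvc hs2 hnf
        obtain ⟨w', hU⟩ := hU₂tot (fnr p w) w
        have hT2 : T₂ w w' := (hU₂T w w').mpr ⟨_, hU⟩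
        exact ⟨(i, w'), fun _ =>
          ⟨h32 p (u i) w w' hinvc hs2 hU, Or.inr (Or.inr ⟨hT2, hnF2⟩)⟩⟩
      · obtain ⟨w', hU⟩ := hU₂tot (fnr p w) w
        have hT2 : T₂ w w' := (hU₂T w w').mpr ⟨_, hU⟩
        have hinv' := h312 p (u i) (u (i + 1)) w w' hinvc hs12 (hustep' i) hU
        by_cases hF2 : F₂ w
        · have hw' : w' = w := hFinFix₂ w w' hF2 hT2
          have hnF1 : ¬ F₁ (u i) := fun h => hb ⟨h, hF2⟩
          exact ⟨(i + 1, w'), fun _ => ⟨hinv', Or.inr (Or.inl ⟨hnF1, rfl, hw'⟩)⟩⟩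
        · exact ⟨(i + 1, w'), fun _ => ⟨hinv', Or.inr (Or.inr ⟨hT2, hF2⟩)⟩⟩
    set stepFn : ℕ × σ₂ → ℕ × σ₂ := fun c => Classical.choose (hex c) with hstepFn
    have hstep : ∀ c, inv p (u c.1) c.2 → Spec c (stepFn c) :=
      fun c => Classical.choose_spec (hex c)
    set c : ℕ → ℕ × σ₂ := fun k => stepFn^[k] (0, v₂) with hcdef
    have hc0 : c 0 = (0, v₂) := rfl
    have hcsucc : ∀ k, c (k + 1) = stepFn (c k) := by
      intro k
      simp [hcdef, Function.iterate_succ_apply']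
    have hinv0 : inv p (u 0) v₂ := by rw [hu0']; exact h1 p v₁ v₂ hpre
    have hinvk : ∀ k, inv p (u (c k).1) (c k).2 := by
      intro k
      induction k with
      | zero => simpa [hc0] using hinv0
      | succ k ih =>
        rw [hcsucc k]
        exact (hstep (c k) ih).1
    have hspec : ∀ k, Spec (c k) (c (k + 1)) := by
      intro k
      rw [hcsucc k]
      exact hstep (c k) (hinvk k)
    set w : ℕ → σ₂ := fun k => (c k).2 with hwdef
    set ii : ℕ → ℕ := fun k => (c k).1 with hiidef
    have hrtg : ∀ k, Relation.ReflTransGen T₂ v₂ (w k) := by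
      intro k
      induction k with
      | zero => exact .refl
      | succ k ih =>
        rcases (hspec k).2 with ⟨_, _, he⟩ | ⟨_, _, he⟩ | ⟨hT, _⟩
        · have hww : w (k + 1) = w k := congrArg Prod.snd he
          rw [hww]; exact ih
        · have hww : w (k + 1) = w k := he
          rw [hww]; exact ih
        · exact ih.tail hT
    by_cases hBF : ∃ k, F₁ (u (ii k)) ∧ F₂ (w k)
    · -- both programs reached final states: P₂ terminates with post
      obtain ⟨k, hF1k, hF2k⟩ := hBF
      have hup : u (ii k) = v₁' := hufin _ hF1k
      have hpost : post v₁' (w k) := by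
        have := h2 p (u (ii k)) (w k) (hinvk k) hF1k hF2k (by rw [hup])
        rwa [hup] at this
      exact Or.inl ⟨w k, (reach_iff T₂ F₂ v₂ (w k)).mpr ⟨hrtg k, hF2k⟩, hpost⟩
    · -- both-final never happens: P₂ diverges
      push_neg at hBF
      have hbc : ∀ k, (¬ F₁ (u (ii k)) ∧ ii (k + 1) = ii k + 1 ∧ w (k + 1) = w k)
          ∨ (T₂ (w k) (w (k + 1)) ∧ ¬ F₂ (w k)) := by
        intro k
        rcases (hspec k).2 with ⟨hF1k, hF2k, _⟩ | ⟨h1', h2', h3'⟩ | h'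
        · exact absurd hF2k (hBF k hF1k)
        · exact Or.inl ⟨h1', h2', h3'⟩
        · exact Or.inr h'
      -- no infinite run of pure-P₁ steps
      have hConst : ∀ k, ¬ (∀ j, ¬ F₁ (u (ii (k + j))) ∧ ii (k + j + 1) = ii (k + j) + 1) := by
        intro k hall
        have hiik : ∀ j, ii (k + j) = ii k + j := by
          intro j
          induction j with
          | zero => rfl
          | succ j ih =>
            rw [← Nat.add_assoc, (hall j).2, ih]
            omega
        have hge : n ≤ ii (k + n) := by rw [hiik n]; omega
        exact (hall n).1 (by rw [huge _ hge]; exact hF1')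
      have hClaimA : ∀ k, ¬ F₂ (w k) := by
        intro k hF2k
        have hconstw : ∀ j, w (k + j) = w k ∧
            (¬ F₁ (u (ii (k + j))) ∧ ii (k + j + 1) = ii (k + j) + 1 ∧ w (k + j + 1) = w (k + j)) := by
          intro j
          induction j with
          | zero =>
            refine ⟨rfl, ?_⟩
            rcases hbc k with hB | hC
            · exact hB
            · exact absurd hF2k hC.2
          | succ j ih =>
            have hwj : w (k + j + 1) = w k := ih.2.2.2.trans ih.1
            have hwj' : w (k + (j + 1)) = w k := by rw [← Nat.add_assoc]; exact hwj
            refine ⟨hwj', ?_⟩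
            rcases hbc (k + (j + 1)) with hB | hC
            · exact hB
            · exact absurd (hwj' ▸ hF2k) hC.2
        exact hConst k (fun j => ⟨(hconstw j).2.1, (hconstw j).2.2.1⟩)
      have hClaimB : ∀ k, ∃ j, T₂ (w (k + j)) (w (k + j + 1)) := by
        intro k
        by_contra h
        push_neg at h
        refine hConst k (fun j => ?_)
        rcases hbc (k + j) with hB | hC
        · exact ⟨hB.1, hB.2.1⟩
        · exact absurd hC.1 (h j)
      -- if no T₂-step occurs before time k+m, then w is constant on [k, k+m]
      have hwconst : ∀ k m, (∀ j' < m, ¬ T₂ (w (k + j')) (w (k + j' + 1))) → w (k + m) = w k := by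
        intro k m
        induction m with
        | zero => intro _; rfl
        | succ m ih =>
          intro hno
          have h' : w (k + m) = w k := ih (fun j' hj' => hno j' (by omega))
          rcases hbc (k + m) with hB | hC
          · rw [show k + (m + 1) = k + m + 1 by omega, hB.2.2, h']
          · exact absurd hC.1 (hno m (by omega))
      set nxt : ℕ → ℕ := fun k => k + Nat.find (hClaimB k) + 1 with hnxtdef
      have hTnxt : ∀ k, T₂ (w k) (w (nxt k)) := by
        intro k
        have hfind := Nat.find_spec (hClaimB k)
        have hconst : w (k + Nat.find (hClaimB k)) = w k :=
          hwconst k (Nat.find (hClaimB k)) (fun j' hj' => Nat.find_min (hClaimB k) hj')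
        rw [hnxtdef]
        simpa [hconst] using hfind
      refine Or.inr ⟨fun j => w (nxt^[j] 0), by simp [hwdef, hc0], ?_, ?_⟩
      · intro j
        show T₂ (w (nxt^[j] 0)) (w (nxt^[j + 1] 0))
        rw [Function.iterate_succ_apply']
        exact hTnxt (nxt^[j] 0)
      · intro j
        exact hClaimA (nxt^[j] 0)
end

section
/- Abstract form of the relative completeness of stratified CEGIS (Theorem 5): Let Cand and Ex be types, Sat : Cand → Prop, sat : Cand → Ex → Prop, and space : ℕ → Set Cand such that every space(m) is a finite set and space(m) ⊆ space(m') whenever m ≤ m'. Suppose there exist N and σ* ∈ space(N) with Sat(σ*). Then there do NOT exist sequences σ : ℕ → Cand, E : ℕ → Set Ex, and s : ℕ → ℕ such that for every n: (i) σ(n) ∈ space(s(n)); (ii) sat(σ(n), e) for every e ∈ E(n); (iii) ¬Sat(σ(n)); (iv) there exists e ∈ E(n+1) with ¬sat(σ(n), e); (v) E(n) ⊆ E(n+1) and sat(σ*, e) for every e ∈ E(n); (vi) s(n) ≤ s(n+1), and if s(n+1) ≠ s(n) then there is no c ∈ space(s(n)) with sat(c, e) for all e ∈ E(n+1). In other words,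 the stratified CEGIS loop cannot run forever and must return a genuine solution whenever some stratum of the template family contains one. -/
/-- Theorem 5 (abstract form): relative completeness of stratified CEGIS.
If some stratum of the template family contains a genuine solution, then the
stratified CEGIS loop cannot run forever. -/
theorem stratified_cegis_relative_completeness
    {Cand Ex : Type*} (Sat : Cand → Prop) (sat : Cand → Ex → Prop)
    (space : ℕ → Set Cand)
    (hfin : ∀ m, (space m).Finite)
    (hmono : ∀ m m', m ≤ m' → space m ⊆ space m')
    (N : ℕ) (σstar : Cand) (hmem : σstar ∈ space N) (hSat : Sat σstar) :
    ¬ ∃ (σ : ℕ → Cand) (E : ℕ → Set Ex) (s : ℕ → ℕ),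
      ∀ n : ℕ,
        -- (i) the n-th candidate is drawn from the current stratum
        σ n ∈ space (s n) ∧
        -- (ii) the n-th candidate satisfies all current examples
        (∀ e ∈ E n, sat (σ n) e) ∧
        -- (iii) the n-th candidate is not a genuine solution
        ¬ Sat (σ n) ∧
        -- (iv) a new counterexample refutes the n-th candidate
        (∃ e ∈ E (n + 1), ¬ sat (σ n) e) ∧
        -- (v) examples grow monotonically and are satisfied by σ*
        E n ⊆ E (n + 1) ∧ (∀ e ∈ E n, sat σstar e) ∧
        -- (vi) strata grow monotonically, and are only enlarged when the
        -- current stratum contains no candidate consistent with the examples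
        s n ≤ s (n + 1) ∧
        (s (n + 1) ≠ s n →
          ¬ ∃ c ∈ space (s n), ∀ e ∈ E (n + 1), sat c e) := by
  rintro ⟨σ, E, s, h⟩
  have hsmono : Monotone s := monotone_nat_of_le_succ fun n => (h n).2.2.2.2.2.2.1
  have hEmono : Monotone E := monotone_nat_of_le_succ fun n => (h n).2.2.2.2.1
  have hstep : ∀ n, N ≤ s n → s (n + 1) = s n := by
    intro n hn
    by_contra hne
    exact (h n).2.2.2.2.2.2.2 hne
      ⟨σstar, hmono N (s n) hn hmem, (h (n + 1)).2.2.2.2.2.1⟩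
  obtain ⟨B, hB⟩ : ∃ B, ∀ n, s n ≤ B := by
    by_cases hc : ∃ n, N ≤ s n
    · obtain ⟨n0, hn0⟩ := hc
      refine ⟨s n0, fun n => ?_⟩
      rcases le_or_gt n n0 with hle | hlt
      · exact hsmono hle
      · have hconst : ∀ k, s (n0 + k) = s n0 := by
          intro k; induction k with
          | zero => rfl
          | succ k ih => rw [← Nat.add_assoc, hstep (n0 + k) (ih ▸ hn0), ih]
        obtain ⟨k, rfl⟩ := Nat.exists_eq_add_of_le hlt.le
        exact (hconst k).le
    · push_neg at hc
      exact ⟨N, fun n => (hc n).le⟩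
  have key : ∀ m n, m < n → σ m ≠ σ n := by
    intro m n hmn heq
    obtain ⟨e, heE, hne⟩ := (h m).2.2.2.1
    have : sat (σ n) e := (h n).2.1 e (hEmono (Nat.succ_le_of_lt hmn) heE)
    exact hne (heq ▸ this)
  have hinj : Function.Injective σ := by
    intro m n heq
    rcases lt_trichotomy m n with hlt | heqq | hgt
    · exact absurd heq (key m n hlt)
    · exact heqq
    · exact absurd heq.symm (key n m hgt)
  have hsub : Set.range σ ⊆ space B := by
    rintro _ ⟨n, rfl⟩; exact hmono (s n) B (hB n) (h n).1
  exact Set.infinite_range_of_injective hinj ((hfin B).subset hsub)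
end

section
/- Trace-following lemma (core of the 'if' direction of Theorem 1): Let k ≥ 1 and let P_1, …, P_k be programs on σ_1, …, σ_k. Suppose predicates inv and sch_A (for every nonempty A ⊆ {1, …, k}) on k-tuples of states satisfy clauses (3), (4), and (5) of C_S. For each i, let π_i : ℕ → σ_i and L_i ∈ ℕ be such that T_i(π_i(j), π_i(j+1)) for all j < L_i and F_i(π_i(L_i)). If inv(π_1(0), …, π_k(0)) holds, then inv(π_1(L_1), …, π_k(L_k)) holds. -/
/-- Trace-following lemma: the core of the 'if' direction of Theorem 1. -/
theorem ksafety_trace_following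
    {k : ℕ} (hk : 1 ≤ k) {σ : Fin k → Type*}
    (T : ∀ i, σ i → σ i → Prop) (F : ∀ i, σ i → Prop)
    (hFinFix : ∀ i v v', F i v → T i v v' → v' = v)
    (hFinLoop : ∀ i v, F i v → T i v v)
    (inv : (∀ i, σ i) → Prop) (sch : Set (Fin k) → (∀ i, σ i) → Prop)
    -- clause (3)
    (h3 : ∀ A : Set (Fin k), A.Nonempty → ∀ x x' : ∀ i, σ i,
      inv x → sch A x → (∀ i ∈ A, T i (x i) (x' i)) → (∀ i ∉ A, x' i = x i) →
      inv x')
    -- clause (4)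
    (h4 : ∀ A : Set (Fin k), A.Nonempty → ∀ x : ∀ i, σ i,
      inv x → sch A x → (∃ i, ¬ F i (x i)) → ∃ i ∈ A, ¬ F i (x i))
    -- clause (5)
    (h5 : ∀ x : ∀ i, σ i, inv x → (∃ i, ¬ F i (x i)) →
      ∃ A : Set (Fin k), A.Nonempty ∧ sch A x)
    (π : ∀ i, ℕ → σ i) (L : Fin k → ℕ)
    (hstep : ∀ i, ∀ j < L i, T i (π i j) (π i (j + 1)))
    (hfin : ∀ i, F i (π i (L i)))
    (hinit : inv (fun i => π i 0)) :
    inv (fun i => π i (L i)) := by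
  classical
  -- Once a trace hits a final state, it stays there.
  have stable : ∀ i m, m ≤ L i → F i (π i m) → π i (L i) = π i m := by
    intro i m hm hF
    have key : ∀ d, m + d ≤ L i → π i (m + d) = π i m := by
      intro d
      induction d with
      | zero => intro _; rfl
      | succ d ih =>
        intro h
        have hd : m + d ≤ L i := by omega
        have heq := ih hd
        have hFd : F i (π i (m + d)) := heq ▸ hF
        have hT : T i (π i (m + d)) (π i (m + d + 1)) := hstep i (m + d) (by omega)
        have hfix := hFinFix i _ _ hFd hT
        calc π i (m + (d + 1)) = π i (m + d + 1) := by ring_nf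
        _ = π i (m + d) := hfix
        _ = π i m := heq
    have h := key (L i - m) (by omega)
    rw [show m + (L i - m) = L i from by omega] at h
    exact h
  have main : ∀ n (p : Fin k → ℕ), (∀ i, p i ≤ L i) →
      (∑ i, (L i - p i)) = n → inv (fun i => π i (p i)) →
      inv (fun i => π i (L i)) := by
    intro n
    induction n using Nat.strong_induction_on with
    | _ n ih =>
      intro p hp hsum hinv
      by_cases hall : ∀ i, F i (π i (p i))
      · have heq : (fun i => π i (L i)) = (fun i => π i (p i)) := by
          funext i; exact stable i (p i) (hp i) (hall i)
        rw [heq]; exact hinv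
      · push_neg at hall
        obtain ⟨A, hAne, hsch⟩ := h5 _ hinv hall
        obtain ⟨i0, hi0A, hi0F⟩ := h4 A hAne _ hinv hsch hall
        have hi0lt : p i0 < L i0 := by
          rcases lt_or_eq_of_le (hp i0) with h | h
          · exact h
          · exact absurd (h ▸ hfin i0) hi0F
        set p' : Fin k → ℕ := fun j => if j ∈ A ∧ p j < L j then p j + 1 else p j with hp'
        have hp'le : ∀ j, p' j ≤ L j := by
          intro j
          by_cases h : j ∈ A ∧ p j < L j
          · simp only [hp', if_pos h]; omega
          · simp only [hp', if_neg h]; exact hp j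
        have hTstep : ∀ j ∈ A, T j (π j (p j)) (π j (p' j)) := by
          intro j hj
          by_cases hlt : p j < L j
          · have hc : j ∈ A ∧ p j < L j := ⟨hj, hlt⟩
            simp only [hp', if_pos hc]
            exact hstep j (p j) hlt
          · have hpj : p j = L j := by have := hp j; omega
            simp only [hp', hj, hlt, and_false, if_false]
            exact hFinLoop j _ (hpj ▸ hfin j)
        have hEq : ∀ j ∉ A, π j (p' j) = π j (p j) := by
          intro j hj
          simp only [hp', hj, false_and, if_false]
        have hinv' : inv (fun j => π j (p' j)) :=
          h3 A hAne _ _ hinv hsch hTstep hEq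
        have hlt : (∑ j, (L j - p' j)) < n := by
          rw [← hsum]
          apply Finset.sum_lt_sum
          · intro j _
            by_cases h : j ∈ A ∧ p j < L j
            · simp only [hp', if_pos h]; omega
            · simp only [hp', if_neg h]; omega
          · refine ⟨i0, Finset.mem_univ _, ?_⟩
            have hc : i0 ∈ A ∧ p i0 < L i0 := ⟨hi0A, hi0lt⟩
            simp only [hp', if_pos hc]; omega
        exact ih _ hlt p' hp'le rfl hinv'
  exact main (∑ i, (L i - (0:ℕ))) (fun _ => 0) (fun i => Nat.zero_le _) rfl hinit
end

section
/- Lock-step solution lemma (the 'only-if' direction of Theorem 1): Let k ≥ 1, programs P_1, …, P_k and predicates pre, post as above, and let LockReach be the reflexive–transitive closure of the relation Step(u⃗, v⃗) := ∀ i, T_i(u_i, v_i) on k-tuples of states. If the programs satisfy the k-safety property with respect to (pre, post), then defining inv(x⃗) := ∃ u⃗, pre(u⃗) ∧ LockReach(u⃗, x⃗), sch_{{1,…,k}}(x⃗) := True, and sch_A(x⃗) := False for every nonempty A ≠ {1, …, k}, yields a semantic solution of C_S (i.e., clauses (1)–(5) hold). -/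
/-- One lock-step move of the k programs. -/
def LockStep {k : ℕ} {σ : Fin k → Type*} (T : ∀ i, σ i → σ i → Prop)
    (u v : ∀ i, σ i) : Prop :=
  ∀ i, T i (u i) (v i)

/-- Lock-step reachability: reflexive–transitive closure of `LockStep`. -/
def LockReach {k : ℕ} {σ : Fin k → Type*} (T : ∀ i, σ i → σ i → Prop) :
    (∀ i, σ i) → (∀ i, σ i) → Prop :=
  Relation.ReflTransGen (LockStep T)

/-- The lock-step invariant: tuples lock-step reachable from a `pre`-tuple. -/
def LockInv {k : ℕ} {σ : Fin k → Type*} (T : ∀ i, σ i → σ i → Prop)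
    (pre : (∀ i, σ i) → Prop) (x : ∀ i, σ i) : Prop :=
  ∃ u : ∀ i, σ i, pre u ∧ LockReach T u x

/-- The lock-step scheduler: `sch_{1,…,k}` is `True`, and `sch_A` is `False`
for every other nonempty `A`. -/
def LockSch {k : ℕ} {σ : Fin k → Type*} (A : Set (Fin k)) (_x : ∀ i, σ i) : Prop :=
  A = Set.univ

lemma lockreach_seq {k : ℕ} {σ : Fin k → Type*} {T : ∀ i, σ i → σ i → Prop}
    {u x : ∀ i, σ i} (h : LockReach T u x) :
    ∃ (n : ℕ) (U : ℕ → ∀ i, σ i), U 0 = u ∧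
      (∀ j < n, LockStep T (U j) (U (j + 1))) ∧ U n = x := by
  induction h with
  | refl => exact ⟨0, fun _ => u, rfl, fun j hj => absurd hj (Nat.not_lt_zero j), rfl⟩
  | tail hbc hstep ih =>
    obtain ⟨n, U, h0, hsteps, hn⟩ := ih
    refine ⟨n + 1, fun j => if j ≤ n then U j else _root_.id (by assumption), ?_, ?_, ?_⟩
    · simp [h0]
    · intro j hj
      rcases Nat.lt_or_ge j n with h | h
      · simpa [Nat.le_of_lt h, Nat.le_of_lt_succ (Nat.succ_lt_succ h)] using hsteps j h
      · have hjn : j = n := Nat.le_antisymm (Nat.le_of_lt_succ hj) h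
        subst hjn
        simpa [hn] using hstep
    · simp

/-- Lock-step solution lemma: the 'only-if' direction of Theorem 1. -/
theorem ksafety_lockstep_solution
    {k : ℕ} (hk : 1 ≤ k) {σ : Fin k → Type*}
    (T : ∀ i, σ i → σ i → Prop) (F : ∀ i, σ i → Prop)
    (hFinFix : ∀ i v v', F i v → T i v v' → v' = v)
    (hFinLoop : ∀ i v, F i v → T i v v)
    (pre post : (∀ i, σ i) → Prop)
    (hsafe : ∀ v v' : ∀ i, σ i, pre v →
      (∀ i, Reach (T i) (F i) (v i) (v' i)) → post v') :
    -- (1)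
    (∀ x, pre x → LockInv T pre x) ∧
    -- (2)
    (∀ x, LockInv T pre x → (∀ i, F i (x i)) → post x) ∧
    -- (3)
    (∀ A : Set (Fin k), A.Nonempty → ∀ x x' : ∀ i, σ i,
      LockInv T pre x → LockSch A x → (∀ i ∈ A, T i (x i) (x' i)) →
      (∀ i ∉ A, x' i = x i) → LockInv T pre x') ∧
    -- (4)
    (∀ A : Set (Fin k), A.Nonempty → ∀ x : ∀ i, σ i,
      LockInv T pre x → LockSch A x → (∃ i, ¬ F i (x i)) →
      ∃ i ∈ A, ¬ F i (x i)) ∧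
    -- (5)
    (∀ x : ∀ i, σ i, LockInv T pre x → (∃ i, ¬ F i (x i)) →
      ∃ A : Set (Fin k), A.Nonempty ∧ LockSch A x) := by
  refine ⟨?_, ?_, ?_, ?_, ?_⟩
  · intro x hx
    exact ⟨x, hx, Relation.ReflTransGen.refl⟩
  · intro x hx hF
    obtain ⟨u, hu, hreach⟩ := hx
    obtain ⟨n, U, h0, hsteps, hn⟩ := lockreach_seq hreach
    refine hsafe u x hu fun i => ⟨n, fun j => U j i, by simp [h0], fun j hj => hsteps j hj i,
      by simp [hn], hF i⟩
  · intro A hA x x' hx hsch hT _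
    obtain ⟨u, hu, hreach⟩ := hx
    refine ⟨u, hu, Relation.ReflTransGen.tail hreach fun i => hT i ?_⟩
    simp [LockSch] at hsch; simp [hsch]
  · intro A hA x hx hsch hF
    obtain ⟨i, hi⟩ := hF
    simp [LockSch] at hsch
    exact ⟨i, by simp [hsch], hi⟩
  · intro x _ _
    exact ⟨Set.univ, ⟨⟨0, hk⟩, trivial⟩, rfl⟩
end

section
/- Divergence-exclusion lemma for C_CoT (Lemma 1 in the appendix of the paper): Let P_1 = (T_1, F_1) on σ_1 and P_2 = (T_2, F_2) on σ_2 be programs. Suppose predicates inv, sch_TT, sch_FT, sch_TF on ℤ × ℤ × σ_1 × σ_2 and a well-founded relation wfr on σ_2 satisfy clauses (3a), (3c), (4a), (4b), (5), and (6) of C_CoT. Let ϖ : ℕ → σ_2 be an infinite sequence with ¬F_2(ϖ(j)) and T_2(ϖ(j), ϖ(j+1)) for all j ≥ 0, and let v_1 ∈ σ_1 with F_1(v_1). Then inv(d, c, v_1, ϖ(j)) is false for all d, c ∈ ℤ and all j ≥ 0. -/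
/-- Divergence-exclusion lemma for C_CoT (Lemma 1 in the appendix). -/
theorem coterm_divergence_exclusion
    {σ₁ σ₂ : Type*}
    (T₁ : σ₁ → σ₁ → Prop) (F₁ : σ₁ → Prop)
    (T₂ : σ₂ → σ₂ → Prop) (F₂ : σ₂ → Prop)
    (hFinFix₁ : ∀ v v', F₁ v → T₁ v v' → v' = v) (hFinLoop₁ : ∀ v, F₁ v → T₁ v v)
    (hFinFix₂ : ∀ v v', F₂ v → T₂ v v' → v' = v) (hFinLoop₂ : ∀ v, F₂ v → T₂ v v)
    (inv schTT schFT schTF : ℤ → ℤ → σ₁ → σ₂ → Prop)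
    (wfr : σ₂ → σ₂ → Prop) (hwf : NoInfChain wfr)
    -- (3a)
    (h3a : ∀ d d' b x₁ x₂ x₂', inv d b x₁ x₂ → schFT d b x₁ x₂ → T₂ x₂ x₂' →
      (F₁ x₁ ∨ F₂ x₂ ∨ d' = d - 1) → inv d' b x₁ x₂')
    -- (3c)
    (h3c : ∀ d b x₁ x₁' x₂ x₂', inv d b x₁ x₂ → schTT d b x₁ x₂ → T₁ x₁ x₁' →
      T₂ x₂ x₂' → inv d b x₁' x₂')
    -- (4a)
    (h4a : ∀ d b x₁ x₂, inv d b x₁ x₂ → schFT d b x₁ x₂ → ¬ F₁ x₁ → ¬ F₂ x₂)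
    -- (4b)
    (h4b : ∀ d b x₁ x₂, inv d b x₁ x₂ → schTF d b x₁ x₂ → ¬ F₂ x₂ → ¬ F₁ x₁)
    -- (5)
    (h5 : ∀ d b x₁ x₂, inv d b x₁ x₂ → (¬ F₁ x₁ ∨ ¬ F₂ x₂) →
      schTT d b x₁ x₂ ∨ schFT d b x₁ x₂ ∨ schTF d b x₁ x₂)
    -- (6)
    (h6 : ∀ d b x₁ x₂ x₂', inv d b x₁ x₂ → F₁ x₁ → ¬ F₂ x₂ → T₂ x₂ x₂' →
      wfr x₂ x₂')
    (ϖ : ℕ → σ₂) (hϖF : ∀ j, ¬ F₂ (ϖ j)) (hϖT : ∀ j, T₂ (ϖ j) (ϖ (j + 1)))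
    (v₁ : σ₁) (hv₁ : F₁ v₁) :
    ∀ (d c : ℤ) (j : ℕ), ¬ inv d c v₁ (ϖ j) := by
  intro d c j hinv
  have step : ∀ k, inv d c v₁ (ϖ k) → inv d c v₁ (ϖ (k + 1)) := by
    intro k hk
    rcases h5 d c v₁ (ϖ k) hk (Or.inr (hϖF k)) with hTT | hFT | hTF
    · exact h3c d c v₁ v₁ (ϖ k) (ϖ (k + 1)) hk hTT (hFinLoop₁ v₁ hv₁) (hϖT k)
    · exact h3a d d c v₁ (ϖ k) (ϖ (k + 1)) hk hFT (hϖT k) (Or.inl hv₁)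
    · exact absurd hv₁ (h4b d c v₁ (ϖ k) hk hTF (hϖF k))
  have invAll : ∀ k, inv d c v₁ (ϖ (j + k)) := by
    intro k
    induction k with
    | zero => exact hinv
    | succ n ih => exact step (j + n) ih
  exact hwf ⟨fun k => ϖ (j + k), fun k =>
    h6 d c v₁ (ϖ (j + k)) (ϖ (j + k + 1)) (invAll k) hv₁ (hϖF (j + k)) (hϖT (j + k))⟩
end

section
/- Well-foundedness of the residual transition relation under co-termination (from the 'only-if' direction of Theorem 2): Let P_1 = (T_1, F_1) on σ_1 and P_2 = (T_2, F_2) on σ_2 be programs and pre a predicate on σ_1 × σ_2. Let LockReach2 be the reflexive–transitive closure of the relation Step((u_1, u_2), (v_1, v_2)) := T_1(u_1, v_1) ∧ T_2(u_2, v_2) on σ_1 × σ_2, and define R := { w ∈ σ_2 : ¬F_2(w) ∧ ∃ u_1 u_2 v_1, pre(u_1, u_2) ∧ LockReach2((u_1, u_2), (v_1, w)) ∧ F_1(v_1) }. If P_1, P_2 satisfy co-termination with respect to pre, then there is no infinite sequence w_0, w_1, … with w_j ∈ R and T_2(w_j, w_{j+1}) for all j ≥ 0 (i.e., the restriction of T_2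 to R is well-founded). -/
/-- One lock-step move of the two programs. -/
def LockStep2 {σ₁ σ₂ : Type*} (T₁ : σ₁ → σ₁ → Prop) (T₂ : σ₂ → σ₂ → Prop)
    (u v : σ₁ × σ₂) : Prop :=
  T₁ u.1 v.1 ∧ T₂ u.2 v.2

/-- Lock-step reachability of the two programs. -/
def LockReach2 {σ₁ σ₂ : Type*} (T₁ : σ₁ → σ₁ → Prop) (T₂ : σ₂ → σ₂ → Prop) :
    σ₁ × σ₂ → σ₁ × σ₂ → Prop :=
  Relation.ReflTransGen (LockStep2 T₁ T₂)

private lemma rtg_path {α : Type*} {r : α → α → Prop} {a b : α}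
    (h : Relation.ReflTransGen r a b) :
    ∃ n : ℕ, ∃ p : ℕ → α, p 0 = a ∧ (∀ j < n, r (p j) (p (j + 1))) ∧ p n = b := by
  induction h with
  | refl => exact ⟨0, fun _ => a, rfl, fun j hj => absurd hj (Nat.not_lt_zero j), rfl⟩
  | tail hab hbc ih =>
    obtain ⟨n, p, h0, hs, hn⟩ := ih
    rename_i b c
    refine ⟨n + 1, fun j => if j ≤ n then p j else c, by simp [h0], ?_, by simp⟩
    intro j hj
    rcases Nat.lt_or_ge j n with h | h
    · simpa [Nat.le_of_lt h, Nat.succ_le_of_lt h] using hs j h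
    · have hjn : j = n := by omega
      subst hjn
      simpa [hn] using hbc

/-- Well-foundedness of the residual transition relation under co-termination
(from the 'only-if' direction of Theorem 2). -/
theorem coterm_residual_wellfounded
    {σ₁ σ₂ : Type*}
    (T₁ : σ₁ → σ₁ → Prop) (F₁ : σ₁ → Prop)
    (T₂ : σ₂ → σ₂ → Prop) (F₂ : σ₂ → Prop)
    (hFinFix₁ : ∀ v v', F₁ v → T₁ v v' → v' = v) (hFinLoop₁ : ∀ v, F₁ v → T₁ v v)
    (hFinFix₂ : ∀ v v', F₂ v → T₂ v v' → v' = v) (hFinLoop₂ : ∀ v, F₂ v → T₂ v v)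
    (pre : σ₁ → σ₂ → Prop)
    (hcoterm : ∀ v₁ v₂ v₁', pre v₁ v₂ → Reach T₁ F₁ v₁ v₁' → ¬ Diverge T₂ F₂ v₂) :
    ¬ ∃ w : ℕ → σ₂,
      (∀ j, (¬ F₂ (w j) ∧ ∃ u₁ u₂ v₁, pre u₁ u₂ ∧
        LockReach2 T₁ T₂ (u₁, u₂) (v₁, w j) ∧ F₁ v₁)) ∧
      (∀ j, T₂ (w j) (w (j + 1))) := by
  rintro ⟨w, hR, hstep⟩
  obtain ⟨hnf0, u₁, u₂, v₁, hpre, hreach, hF₁⟩ := hR 0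
  obtain ⟨n, p, hp0, hps, hpn⟩ := rtg_path hreach
  have hReach₁ : Reach T₁ F₁ u₁ v₁ :=
    ⟨n, fun j => (p j).1, by simp [hp0], fun j hj => (hps j hj).1, by simp [hpn], hF₁⟩
  have hpn2 : (p n).2 = w 0 := by rw [hpn]
  have hnfp : ∀ j ≤ n, ¬ F₂ ((p j).2) := by
    intro j hj hF
    have key : ∀ k, j ≤ k → k ≤ n → (p k).2 = (p j).2 := by
      intro k hk
      induction k, hk using Nat.le_induction with
      | base => intro _; rfl
      | succ k hk ih =>
        intro hkn
        have h1 := ih (by omega)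
        have := hFinFix₂ _ _ (h1 ▸ hF) (hps k (by omega)).2
        rw [this, h1]
    have := key n hj le_rfl
    exact hnf0 (by rw [← hpn2, this]; exact hF)
  have hDiv : Diverge T₂ F₂ u₂ := by
    refine ⟨fun j => if j < n then (p j).2 else w (j - n), ?_, ?_, ?_⟩
    · rcases Nat.eq_zero_or_pos n with h | h
      · subst h
        simp only [lt_irrefl, if_neg (lt_irrefl 0), Nat.sub_self, ← hpn2, Nat.lt_irrefl,
          if_false]
        simp [hp0]
      · simp [h, hp0]
    · intro j
      by_cases h : j + 1 < n
      · have hj : j < n := by omega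
        simpa [hj, h] using (hps j hj).2
      · by_cases h2 : j < n
        · have hj1 : j + 1 = n := by omega
          have hT := (hps j h2).2
          rw [hj1, hpn2] at hT
          simp only [if_pos h2, if_neg h]
          have : j + 1 - n = 0 := by omega
          rw [this]
          exact hT
        · have e : j + 1 - n = (j - n) + 1 := by omega
          simp only [if_neg h, if_neg h2, e]
          exact hstep (j - n)
    · intro j
      by_cases h : j < n
      · simpa [h] using hnfp j h.le
      · simpa [h] using (hR (j - n)).1
  exact hcoterm u₁ u₂ v₁ hpre hReach₁ hDiv
end

section
/- Lock-step solution for C_CoT (the 'only-if' direction of Theorem 2 with a specific scheduler): Let P_1 = (T_1, F_1) on σ_1 and P_2 = (T_2, F_2) on σ_2 be programs and pre a predicate on σ_1 × σ_2. If P_1, P_2 satisfy co-termination with respect to pre, then C_CoT has a semantic solution in which sch_TT(d, b, x_1, x_2) ≡ True, sch_FT ≡ sch_TF ≡ False, and fnbnd ≡ 0; that is, there exist a predicate inv on ℤ × ℤ × σ_1 × σ_2 and a well-founded relation wfr on σ_2 such that clauses (1)–(6) of C_CoT hold with these choices of sch_TT, sch_FT, sch_TF, and fnbnd. -/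
/-- The lock-step scheduler for C_CoT: `sch_TT` is identically `True`. -/
def CoSchTT {σ₁ σ₂ : Type*} (_d _b : ℤ) (_x₁ : σ₁) (_x₂ : σ₂) : Prop := True

/-- The lock-step scheduler for C_CoT: `sch_FT` is identically `False`. -/
def CoSchFT {σ₁ σ₂ : Type*} (_d _b : ℤ) (_x₁ : σ₁) (_x₂ : σ₂) : Prop := False

/-- The lock-step scheduler for C_CoT: `sch_TF` is identically `False`. -/
def CoSchTF {σ₁ σ₂ : Type*} (_d _b : ℤ) (_x₁ : σ₁) (_x₂ : σ₂) : Prop := False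

-- aux lemmas to insert above the theorem

/-- Convert a ReflTransGen path to an indexed finite path. -/
lemma rtg_to_seq {σ : Type*} {T : σ → σ → Prop} {v v' : σ}
    (h : Relation.ReflTransGen T v v') :
    ∃ (n : ℕ) (u : ℕ → σ), u 0 = v ∧ (∀ j < n, T (u j) (u (j + 1))) ∧ u n = v' := by
  induction h with
  | refl => exact ⟨0, fun _ => v, rfl, by omega, rfl⟩
  | @tail b c _ hstep ih =>
    obtain ⟨n, u, h0, hT, hn⟩ := ih
    refine ⟨n + 1, fun j => if j ≤ n then u j else c, by simp [h0], ?_, by simp⟩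
    intro j hj
    rcases Nat.lt_or_ge j n with h | h
    · simpa [Nat.le_of_lt h, Nat.succ_le_of_lt h] using hT j h
    · have hjn : j = n := by omega
      subst hjn
      simpa [hn] using hstep

lemma diverge_back {σ : Type*} {T : σ → σ → Prop} {F : σ → Prop}
    (hFix : ∀ v v', F v → T v v' → v' = v) {a b : σ}
    (hstep : T a b) (hdiv : Diverge T F b) : Diverge T F a := by
  obtain ⟨u, h0, hT, hF⟩ := hdiv
  by_cases hfa : F a
  · have : b = a := hFix a b hfa hstep
    exact absurd (show F (u 0) by rw [h0, this]; exact hfa) (hF 0)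
  · refine ⟨fun j => Nat.rec a (fun j _ => u j) j, rfl, ?_, ?_⟩
    · intro j
      cases j with
      | zero => simpa [h0] using hstep
      | succ k => exact hT k
    · intro j
      cases j with
      | zero => exact hfa
      | succ k => exact hF k

/-- Lock-step solution for C_CoT: the 'only-if' direction of Theorem 2,
with scheduler `sch_TT ≡ True`, `sch_FT ≡ sch_TF ≡ False` and `fnbnd ≡ 0`. -/
theorem coterm_lockstep_solution
    {σ₁ σ₂ : Type*}
    (T₁ : σ₁ → σ₁ → Prop) (F₁ : σ₁ → Prop)
    (T₂ : σ₂ → σ₂ → Prop) (F₂ : σ₂ → Prop)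
    (hFinFix₁ : ∀ v v', F₁ v → T₁ v v' → v' = v) (hFinLoop₁ : ∀ v, F₁ v → T₁ v v)
    (hFinFix₂ : ∀ v v', F₂ v → T₂ v v' → v' = v) (hFinLoop₂ : ∀ v, F₂ v → T₂ v v)
    (pre : σ₁ → σ₂ → Prop)
    (hcoterm : ∀ v₁ v₂ v₁', pre v₁ v₂ → Reach T₁ F₁ v₁ v₁' → ¬ Diverge T₂ F₂ v₂) :
    ∃ (inv : ℤ → ℤ → σ₁ → σ₂ → Prop) (wfr : σ₂ → σ₂ → Prop),
      NoInfChain wfr ∧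
      -- (1), with fnbnd ≡ 0
      (∀ x₁ x₂, pre x₁ x₂ → inv 0 0 x₁ x₂) ∧
      -- (2)
      (∀ d b x₁ x₂, inv d b x₁ x₂ → ¬ F₁ x₁ → ¬ F₂ x₂ →
        (-b ≤ d ∧ d ≤ b ∧ b ≥ 0)) ∧
      -- (3a)
      (∀ d d' b x₁ x₂ x₂', inv d b x₁ x₂ → CoSchFT d b x₁ x₂ → T₂ x₂ x₂' →
        (F₁ x₁ ∨ F₂ x₂ ∨ d' = d - 1) → inv d' b x₁ x₂') ∧
      -- (3b)
      (∀ d d' b x₁ x₁' x₂, inv d b x₁ x₂ → CoSchTF d b x₁ x₂ → T₁ x₁ x₁' →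
        (F₁ x₁ ∨ F₂ x₂ ∨ d' = d + 1) → inv d' b x₁' x₂) ∧
      -- (3c)
      (∀ d b x₁ x₁' x₂ x₂', inv d b x₁ x₂ → CoSchTT d b x₁ x₂ → T₁ x₁ x₁' →
        T₂ x₂ x₂' → inv d b x₁' x₂') ∧
      -- (4a)
      (∀ d b x₁ x₂, inv d b x₁ x₂ → CoSchFT d b x₁ x₂ → ¬ F₁ x₁ → ¬ F₂ x₂) ∧
      -- (4b)
      (∀ d b x₁ x₂, inv d b x₁ x₂ → CoSchTF d b x₁ x₂ → ¬ F₂ x₂ → ¬ F₁ x₁) ∧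
      -- (5)
      (∀ d b x₁ x₂, inv d b x₁ x₂ → (¬ F₁ x₁ ∨ ¬ F₂ x₂) →
        CoSchTT d b x₁ x₂ ∨ CoSchFT d b x₁ x₂ ∨ CoSchTF d b x₁ x₂) ∧
      -- (6)
      (∀ d b x₁ x₂ x₂', inv d b x₁ x₂ → F₁ x₁ → ¬ F₂ x₂ → T₂ x₂ x₂' →
        wfr x₂ x₂') := by
  classical
  set Tpair : σ₁ × σ₂ → σ₁ × σ₂ → Prop := fun p q => T₁ p.1 q.1 ∧ T₂ p.2 q.2 with hTpair
  set R : σ₁ × σ₂ → σ₁ × σ₂ → Prop := Relation.ReflTransGen Tpair with hR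
  set inv : ℤ → ℤ → σ₁ → σ₂ → Prop := fun d b x₁ x₂ =>
    d = 0 ∧ b = 0 ∧ ∃ a : σ₁ × σ₂, pre a.1 a.2 ∧ R a (x₁, x₂) with hinv
  set wfr : σ₂ → σ₂ → Prop := fun x₂ x₂' => T₂ x₂ x₂' ∧ ¬ F₂ x₂ ∧
    ∃ (x₁ : σ₁) (a : σ₁ × σ₂), pre a.1 a.2 ∧ R a (x₁, x₂) ∧ F₁ x₁ with hwfr
  -- key: no infinite wfr chain
  have hnochain : NoInfChain wfr := by
    rintro ⟨v, hv⟩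
    obtain ⟨hT0, hnF0, x₁, a, hpre, hRa, hF₁⟩ := hv 0
    -- Diverge from v 0
    have hdiv : Diverge T₂ F₂ (v 0) :=
      ⟨v, rfl, fun j => (hv j).1, fun j => (hv j).2.1⟩
    -- Reach from a.1 to x₁ and Diverge from a.2
    have key : ∀ p q : σ₁ × σ₂, R p q → F₁ q.1 → Diverge T₂ F₂ q.2 →
        Reach T₁ F₁ p.1 q.1 ∧ Diverge T₂ F₂ p.2 := by
      intro p q hpq
      induction hpq using Relation.ReflTransGen.head_induction_on with
      | refl =>
        intro hF hd
        refine ⟨⟨0, fun _ => q.1, rfl, by omega, rfl, hF⟩, hd⟩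
      | @head b c hstep _ ih =>
        intro hF hd
        obtain ⟨hr, hdd⟩ := ih hF hd
        obtain ⟨n, u, h0, hT, hn, hFn⟩ := hr
        refine ⟨⟨n + 1, fun j => Nat.rec b.1 (fun j _ => u j) j, rfl, ?_, hn, hFn⟩,
          diverge_back hFinFix₂ hstep.2 hdd⟩
        intro j hj
        cases j with
        | zero => simpa [h0] using hstep.1
        | succ k => exact hT k (by omega)
    obtain ⟨hreach, hdiv'⟩ := key a (x₁, v 0) hRa hF₁ hdiv
    exact hcoterm a.1 a.2 x₁ hpre hreach hdiv'
  refine ⟨inv, wfr, hnochain, ?_, ?_, ?_, ?_, ?_, ?_, ?_, ?_, ?_⟩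
  · intro x₁ x₂ hp
    exact ⟨rfl, rfl, ⟨(x₁, x₂), hp, Relation.ReflTransGen.refl⟩⟩
  · rintro d b x₁ x₂ ⟨hd, hb, -⟩ - -
    simp [hd, hb]
  · rintro d d' b x₁ x₂ x₂' - hsch
    exact absurd hsch id
  · rintro d d' b x₁ x₁' x₂ - hsch
    exact absurd hsch id
  · rintro d b x₁ x₁' x₂ x₂' ⟨hd, hb, a, hpre, hRa⟩ - h1 h2
    exact ⟨hd, hb, a, hpre, hRa.tail ⟨h1, h2⟩⟩
  · rintro d b x₁ x₂ - hsch
    exact absurd hsch id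
  · rintro d b x₁ x₂ - hsch
    exact absurd hsch id
  · intro _ _ _ _ _ _
    exact Or.inl trivial
  · rintro d b x₁ x₂ x₂' ⟨hd, hb, a, hpre, hRa⟩ hF₁ hnF₂ hT
    exact ⟨hT, hnF₂, x₁, a, hpre, hRa, hF₁⟩
end

section
/- Determinization soundness for TI-GNI (from the 'if' direction of Theorem 3): Under the stated assumptions on U_2 (including totality), let f : σ_1 × σ_2 → R be any function and suppose that for all v_1, v_2, v_1', w': pre(v_1, v_2), v_1 ⇓_1 v_1', and (v_1', v_2) ⇓^f (v_1', w') imply post(v_1', w'). Then P_1, P_2 satisfy TI-GNI with respect to (pre, post). -/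
/-- Transition relation of the `f`-determinized program `P₂^f` on `σ₁ × σ₂`. -/
def DetT {σ₁ σ₂ R : Type*} (U₂ : R → σ₂ → σ₂ → Prop) (f : σ₁ × σ₂ → R) :
    σ₁ × σ₂ → σ₁ × σ₂ → Prop :=
  fun pw pw' => pw'.1 = pw.1 ∧ U₂ (f (pw.1, pw.2)) pw.2 pw'.2

/-- Final-state predicate of the `f`-determinized program `P₂^f`. -/
def DetF {σ₁ σ₂ : Type*} (F₂ : σ₂ → Prop) : σ₁ × σ₂ → Prop :=
  fun pw => F₂ pw.2

/-- Determinization soundness for TI-GNI (from the 'if' direction of Theorem 3). -/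
theorem tigni_determinization_sound
    {σ₁ σ₂ : Type*} {R : Type*} [Nonempty R]
    (T₁ : σ₁ → σ₁ → Prop) (F₁ : σ₁ → Prop)
    (T₂ : σ₂ → σ₂ → Prop) (F₂ : σ₂ → Prop)
    (hFinFix₁ : ∀ v v', F₁ v → T₁ v v' → v' = v) (hFinLoop₁ : ∀ v, F₁ v → T₁ v v)
    (hFinFix₂ : ∀ v v', F₂ v → T₂ v v' → v' = v) (hFinLoop₂ : ∀ v, F₂ v → T₂ v v)
    (pre post : σ₁ → σ₂ → Prop)
    (U₂ : R → σ₂ → σ₂ → Prop)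
    (hU₂T : ∀ w w', T₂ w w' ↔ ∃ r, U₂ r w w')
    (hU₂fun : ∀ r w w' w'', U₂ r w w' → U₂ r w w'' → w' = w'')
    (hU₂tot : ∀ r w, ∃ w', U₂ r w w')
    (f : σ₁ × σ₂ → R)
    (hdet : ∀ v₁ v₂ v₁' w', pre v₁ v₂ → Reach T₁ F₁ v₁ v₁' →
      Reach (DetT U₂ f) (DetF F₂) (v₁', v₂) (v₁', w') → post v₁' w') :
    ∀ v₁ v₂ v₁', pre v₁ v₂ → Reach T₁ F₁ v₁ v₁' →
      (∃ v₂', Reach T₂ F₂ v₂ v₂' ∧ post v₁' v₂') ∨ Diverge T₂ F₂ v₂ := by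
  intro v₁ v₂ v₁' hpre hr1
  classical
  let w : ℕ → σ₂ := fun n => Nat.rec v₂
    (fun _ prev => Classical.choose (hU₂tot (f (v₁', prev)) prev)) n
  have hwstep : ∀ n, U₂ (f (v₁', w n)) (w n) (w (n+1)) := fun n =>
    Classical.choose_spec (hU₂tot (f (v₁', w n)) (w n))
  have hT₂ : ∀ n, T₂ (w n) (w (n+1)) := fun n => (hU₂T _ _).2 ⟨_, hwstep n⟩
  by_cases hfin : ∃ n, F₂ (w n)
  · obtain ⟨n, hn⟩ := hfin
    left
    refine ⟨w n, ⟨n, w, rfl, fun j _ => hT₂ j, rfl, hn⟩, ?_⟩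
    exact hdet v₁ v₂ v₁' (w n) hpre hr1
      ⟨n, fun j => (v₁', w j), rfl, fun j _ => ⟨rfl, hwstep j⟩, rfl, hn⟩
  · right
    exact ⟨w, rfl, hT₂, fun j h => hfin ⟨j, h⟩⟩
end

section
/- Existence of a determinizing choice function for TI-GNI (from the 'only-if' direction of Theorem 3): Under the stated assumptions on U_2 (including totality), if P_1, P_2 satisfy TI-GNI with respect to (pre, post), then there exists a function f : σ_1 × σ_2 → R such that for all v_1, v_2, v_1', w': pre(v_1, v_2), v_1 ⇓_1 v_1', and (v_1', v_2) ⇓^f (v_1', w') imply post(v_1', w'). -/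
/-- Existence of a determinizing choice function for TI-GNI
(from the 'only-if' direction of Theorem 3). -/
theorem tigni_choice_function_exists
    {σ₁ σ₂ : Type*} {R : Type*} [Nonempty R]
    (T₁ : σ₁ → σ₁ → Prop) (F₁ : σ₁ → Prop)
    (T₂ : σ₂ → σ₂ → Prop) (F₂ : σ₂ → Prop)
    (hFinFix₁ : ∀ v v', F₁ v → T₁ v v' → v' = v) (hFinLoop₁ : ∀ v, F₁ v → T₁ v v)
    (hFinFix₂ : ∀ v v', F₂ v → T₂ v v' → v' = v) (hFinLoop₂ : ∀ v, F₂ v → T₂ v v)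
    (pre post : σ₁ → σ₂ → Prop)
    (U₂ : R → σ₂ → σ₂ → Prop)
    (hU₂T : ∀ w w', T₂ w w' ↔ ∃ r, U₂ r w w')
    (hU₂fun : ∀ r w w' w'', U₂ r w w' → U₂ r w w'' → w' = w'')
    (hU₂tot : ∀ r w, ∃ w', U₂ r w w')
    (hTIGNI : ∀ v₁ v₂ v₁', pre v₁ v₂ → Reach T₁ F₁ v₁ v₁' →
      (∃ v₂', Reach T₂ F₂ v₂ v₂' ∧ post v₁' v₂') ∨ Diverge T₂ F₂ v₂) :
    ∃ f : σ₁ × σ₂ → R,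
      ∀ v₁ v₂ v₁' w', pre v₁ v₂ → Reach T₁ F₁ v₁ v₁' →
        Reach (DetT U₂ f) (DetF F₂) (v₁', v₂) (v₁', w') → post v₁' w' := by
  classical
  set A : σ₁ → σ₂ → Prop := fun p w => ∃ w', Reach T₂ F₂ w w' ∧ post p w' with hAdef
  -- a good step exists from any non-final state satisfying the invariant
  have key : ∀ p w, ¬ F₂ w → (A p w ∨ Diverge T₂ F₂ w) →
      ∃ r, ∀ w₁, U₂ r w w₁ → (A p w₁ ∨ Diverge T₂ F₂ w₁) := by
    intro p w hw hinv
    rcases hinv with ⟨w', ⟨n, u, hu0, hstep, hun, hF⟩, hpost⟩ | ⟨u, hu0, hstep, hnF⟩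
    · have hn : n ≠ 0 := by
        rintro rfl
        rw [← hu0, hun] at hw; exact hw hF
      obtain ⟨m, rfl⟩ := Nat.exists_eq_succ_of_ne_zero hn
      have hT : T₂ w (u 1) := by
        have := hstep 0 (Nat.succ_pos m); rwa [hu0] at this
      obtain ⟨r, hr⟩ := (hU₂T w (u 1)).1 hT
      refine ⟨r, fun w₁ h₁ => ?_⟩
      have hw₁ : w₁ = u 1 := hU₂fun r w w₁ (u 1) h₁ hr
      exact Or.inl ⟨w', ⟨m, fun j => u (j + 1), by rw [hw₁],
        fun j hj => hstep (j + 1) (by omega), hun, hF⟩, hpost⟩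
    · have hT : T₂ w (u 1) := by
        have := hstep 0; rwa [hu0] at this
      obtain ⟨r, hr⟩ := (hU₂T w (u 1)).1 hT
      refine ⟨r, fun w₁ h₁ => ?_⟩
      have hw₁ : w₁ = u 1 := hU₂fun r w w₁ (u 1) h₁ hr
      right
      exact ⟨fun j => u (j + 1), by rw [hw₁], fun j => hstep (j + 1), fun j => hnF (j + 1)⟩
  set f : σ₁ × σ₂ → R := fun pw =>
    if h : ¬ F₂ pw.2 ∧ (A pw.1 pw.2 ∨ Diverge T₂ F₂ pw.2) then
      (key pw.1 pw.2 h.1 h.2).choose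
    else Classical.arbitrary R with hfdef
  have hf : ∀ p w, ¬ F₂ w → (A p w ∨ Diverge T₂ F₂ w) →
      ∀ w₁, U₂ (f (p, w)) w w₁ → (A p w₁ ∨ Diverge T₂ F₂ w₁) := by
    intro p w hw hinv w₁ h₁
    have hcond : ¬ F₂ (p, w).2 ∧ (A (p, w).1 (p, w).2 ∨ Diverge T₂ F₂ (p, w).2) :=
      ⟨hw, hinv⟩
    rw [hfdef] at h₁
    simp only [dif_pos hcond] at h₁
    exact (key p w hw hinv).choose_spec w₁ h₁
  -- at a final state, staying put
  have finstay : ∀ r w w₁, F₂ w → U₂ r w w₁ → w₁ = w := by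
    intro r w w₁ hF h
    exact hFinFix₂ w w₁ hF ((hU₂T w w₁).2 ⟨r, h⟩)
  -- at a final state with A, post holds
  have finpost : ∀ p w, F₂ w → A p w → post p w := by
    intro p w hF ⟨w', ⟨n, u, hu0, hstep, hun, hFw'⟩, hpost⟩
    have hall : ∀ j, j ≤ n → u j = w := by
      intro j
      induction j with
      | zero => intro _; exact hu0
      | succ j ih =>
        intro hj
        have huj : u j = w := ih (by omega)
        have := hstep j (by omega)
        rw [huj] at this
        exact hFinFix₂ w (u (j + 1)) hF this
    have : w' = w := hun ▸ hall n le_rfl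
    exact this ▸ hpost
  have main : ∀ n p w, (A p w ∨ Diverge T₂ F₂ w) →
      ∀ u : ℕ → σ₁ × σ₂, u 0 = (p, w) →
        (∀ j < n, DetT U₂ f (u j) (u (j + 1))) → F₂ (u n).2 → post p (u n).2 := by
    intro n
    induction n with
    | zero =>
      intro p w hinv u hu0 _ hF
      rw [hu0] at hF
      rcases hinv with hA | ⟨v, hv0, _, hnF⟩
      · rw [hu0]; exact finpost p w hF hA
      · exact absurd (hv0 ▸ hF) (hnF 0)
    | succ n ih =>
      intro p w hinv u hu0 hstep hF
      obtain ⟨h1, h2⟩ := hstep 0 (Nat.succ_pos n)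
      rw [hu0] at h1 h2
      simp only at h1 h2
      by_cases hw : F₂ w
      · have : (u 1).2 = w := finstay _ w _ hw h2
        have hu1 : u 1 = (p, w) := Prod.ext h1 this
        have := ih p w hinv (fun j => u (j + 1)) hu1 (fun j hj => hstep (j + 1) (by omega))
        exact this hF
      · have hinv1 := hf p w hw hinv (u 1).2 h2
        have hu1 : u 1 = (p, (u 1).2) := Prod.ext h1 rfl
        have := ih p (u 1).2 hinv1 (fun j => u (j + 1)) hu1
          (fun j hj => hstep (j + 1) (by omega))
        exact this hF
  refine ⟨f, fun v₁ v₂ v₁' w' hpre hreach₁ hreachf => ?_⟩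
  obtain ⟨n, u, hu0, hstep, hun, hFend⟩ := hreachf
  have hinv : A v₁' v₂ ∨ Diverge T₂ F₂ v₂ := hTIGNI v₁ v₂ v₁' hpre hreach₁
  have := main n v₁' v₂ hinv u hu0 hstep (hun ▸ hFend)
  rwa [hun] at this
end

section
/- Existence of a terminating determinizing choice function for TS-GNI (from the 'only-if' direction of Theorem 4): Under the stated assumptions on U_2 (including totality), if P_1, P_2 satisfy TS-GNI with respect to (pre, post), then there exists a function f : σ_1 × σ_2 → R such that for all v_1, v_2, v_1' with pre(v_1, v_2) and v_1 ⇓_1 v_1', there exists w' with (v_1', v_2) ⇓^f (v_1', w') and post(v_1', w'). -/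
/-- There is a path of length `n` from `w` to a final state satisfying `post p`. -/
def GoodN {σ₁ σ₂ : Type*} (T₂ : σ₂ → σ₂ → Prop) (F₂ : σ₂ → Prop)
    (post : σ₁ → σ₂ → Prop) (p : σ₁) (w : σ₂) (n : ℕ) : Prop :=
  ∃ u : ℕ → σ₂, u 0 = w ∧ (∀ j < n, T₂ (u j) (u (j + 1))) ∧ F₂ (u n) ∧ post p (u n)

lemma goodN_succ {σ₁ σ₂ : Type*} {T₂ : σ₂ → σ₂ → Prop} {F₂ : σ₂ → Prop}
    {post : σ₁ → σ₂ → Prop} {p : σ₁} {w : σ₂} {n : ℕ}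
    (h : GoodN T₂ F₂ post p w (n + 1)) :
    ∃ w₀, T₂ w w₀ ∧ GoodN T₂ F₂ post p w₀ n := by
  obtain ⟨u, hu0, hstep, hF, hpost⟩ := h
  refine ⟨u 1, by simpa [hu0] using hstep 0 (Nat.succ_pos n), fun j => u (j + 1), rfl,
    fun j hj => hstep (j + 1) (by omega), hF, hpost⟩

lemma reach_step {σ : Type*} {T : σ → σ → Prop} {F : σ → Prop} {v v₀ v' : σ}
    (h1 : T v v₀) (h2 : Reach T F v₀ v') : Reach T F v v' := by
  obtain ⟨n, u, hu0, hstep, hun, hF⟩ := h2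
  refine ⟨n + 1, fun j => Nat.rec v (fun j _ => u j) j, rfl, ?_, hun, hF⟩
  intro j hj
  cases j with
  | zero => simpa [hu0] using h1
  | succ j => exact hstep j (by omega)

/-- Existence of a terminating determinizing choice function for TS-GNI
(from the 'only-if' direction of Theorem 4). -/
theorem tsgni_choice_function_exists
    {σ₁ σ₂ : Type*} {R : Type*} [Nonempty R]
    (T₁ : σ₁ → σ₁ → Prop) (F₁ : σ₁ → Prop)
    (T₂ : σ₂ → σ₂ → Prop) (F₂ : σ₂ → Prop)
    (hFinFix₁ : ∀ v v', F₁ v → T₁ v v' → v' = v) (hFinLoop₁ : ∀ v, F₁ v → T₁ v v)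
    (hFinFix₂ : ∀ v v', F₂ v → T₂ v v' → v' = v) (hFinLoop₂ : ∀ v, F₂ v → T₂ v v)
    (pre post : σ₁ → σ₂ → Prop)
    (U₂ : R → σ₂ → σ₂ → Prop)
    (hU₂T : ∀ w w', T₂ w w' ↔ ∃ r, U₂ r w w')
    (hU₂fun : ∀ r w w' w'', U₂ r w w' → U₂ r w w'' → w' = w'')
    (hU₂tot : ∀ r w, ∃ w', U₂ r w w')
    (hTSGNI : ∀ v₁ v₂ v₁', pre v₁ v₂ → Reach T₁ F₁ v₁ v₁' →
      ∃ v₂', Reach T₂ F₂ v₂ v₂' ∧ post v₁' v₂') :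
    ∃ f : σ₁ × σ₂ → R,
      ∀ v₁ v₂ v₁', pre v₁ v₂ → Reach T₁ F₁ v₁ v₁' →
        ∃ w', Reach (DetT U₂ f) (DetF F₂) (v₁', v₂) (v₁', w') ∧ post v₁' w' := by
  classical
  -- choose f pointwise
  have hexists : ∀ pw : σ₁ × σ₂, ∃ r : R,
      ∀ h : ∃ n, GoodN T₂ F₂ post pw.1 pw.2 n, Nat.find h ≠ 0 →
        ∃ w₀, U₂ r pw.2 w₀ ∧
          ∃ h₀ : ∃ n, GoodN T₂ F₂ post pw.1 w₀ n, Nat.find h₀ < Nat.find h := by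
    intro pw
    by_cases h : ∃ n, GoodN T₂ F₂ post pw.1 pw.2 n
    · rcases Nat.eq_zero_or_pos (Nat.find h) with h0 | hpos
      · exact ⟨Classical.arbitrary R, fun h' hne => absurd (by simpa using h0) (by
          have : Nat.find h' = Nat.find h := rfl
          omega)⟩
      · obtain ⟨m, hm⟩ := Nat.exists_eq_add_of_lt hpos
        have hspec : GoodN T₂ F₂ post pw.1 pw.2 (Nat.find h) := Nat.find_spec h
        rw [hm] at hspec
        simp only [zero_add] at hspec
        obtain ⟨w₀, hT, hgood⟩ := goodN_succ hspec
        obtain ⟨r, hr⟩ := (hU₂T pw.2 w₀).mp hT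
        refine ⟨r, fun h' _ => ⟨w₀, hr, ⟨m, hgood⟩, ?_⟩⟩
        have h'' : Nat.find h' = Nat.find h := rfl
        have hle : Nat.find (⟨m, hgood⟩ : ∃ n, GoodN T₂ F₂ post pw.1 w₀ n) ≤ m :=
          Nat.find_le hgood
        omega
    · exact ⟨Classical.arbitrary R, fun h' _ => absurd h' h⟩
  choose f hf using hexists
  refine ⟨f, ?_⟩
  intro v₁ v₂ v₁' hpre hreach
  obtain ⟨v₂', ⟨n, u, hu0, hstep, hun, hF⟩, hpost⟩ := hTSGNI v₁ v₂ v₁' hpre hreach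
  have hg : ∃ n, GoodN T₂ F₂ post v₁' v₂ n :=
    ⟨n, u, hu0, hstep, by rwa [hun], by rwa [hun]⟩
  -- main induction on the distance
  have main : ∀ N : ℕ, ∀ w, ∀ h : ∃ m, GoodN T₂ F₂ post v₁' w m, Nat.find h = N →
      ∃ w', Reach (DetT U₂ f) (DetF F₂) (v₁', w) (v₁', w') ∧ post v₁' w' := by
    intro N
    induction N using Nat.strong_induction_on with
    | _ N ih =>
      intro w h hN
      by_cases h0 : Nat.find h = 0
      · obtain ⟨u, hu0, _, hF2, hp⟩ := Nat.find_spec h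
        rw [h0] at hF2 hp
        rw [hu0] at hF2 hp
        exact ⟨w, ⟨0, fun _ => (v₁', w), rfl, fun j hj => absurd hj (Nat.not_lt_zero j),
          rfl, hF2⟩, hp⟩
      · obtain ⟨w₀, hU, h₀, hlt⟩ := hf (v₁', w) h h0
        obtain ⟨w', hr, hp⟩ := ih (Nat.find h₀) (by omega) w₀ h₀ rfl
        exact ⟨w', reach_step (v₀ := (v₁', w₀)) ⟨rfl, hU⟩ hr, hp⟩
  exact main (Nat.find hg) v₂ hg rfl
end

section
/- Well-foundedness of the template for well-founded predicate variables (claimed for the stratified template family T_X^↓ of Fig. 4): Let α be a type, np, nl ∈ ℕ, r : Fin np → Fin nl → α → ℤ a family of ranking functions, and D : Fin np → α → Prop a family of discriminators. Define DEC(i, j, x, y) := ∃ k : Fin nl, r(i, k)(x) > r(j, k)(y) ∧ ∀ ℓ < k, r(i, ℓ)(x) ≥ r(j, ℓ)(y), and define W(x, y) := (∀ i k, r(i, k)(x) ≥ 0) ∧ (∃ i, D(i)(x)) ∧ (∃ j, D(j)(y)) ∧ (∃ i, D(i)(x) ∧ ∀ j, D(j)(y) → DEC(i, j, x, y)). Then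 there is no infinite sequence x_0, x_1, … in α with W(x_n, x_{n+1}) for all n ≥ 0. -/
/-- `DEC i j x y`: the lexicographic ranking value of region `i` at `x` is
strictly greater than that of region `j` at `y`. -/
def DEC {α : Type*} {np nl : ℕ} (r : Fin np → Fin nl → α → ℤ)
    (i j : Fin np) (x y : α) : Prop :=
  ∃ k : Fin nl, r i k x > r j k y ∧ ∀ ℓ : Fin nl, ℓ < k → r i ℓ x ≥ r j ℓ y

/-- The relation denoted by the stratified template family `T_X^↓` for
well-founded predicate variables (Fig. 4 of the paper). -/
def TemplateWF {α : Type*} {np nl : ℕ} (r : Fin np → Fin nl → α → ℤ)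
    (D : Fin np → α → Prop) (x y : α) : Prop :=
  (∀ i k, r i k x ≥ 0) ∧
  (∃ i, D i x) ∧
  (∃ j, D j y) ∧
  (∃ i, D i x ∧ ∀ j, D j y → DEC r i j x y)

/-- If `a k < b k` and `a ℓ ≤ b ℓ` for all `ℓ < k`, then `a` is
lexicographically smaller than `b`. -/
lemma lex_lt_of_lt_of_le {n : ℕ} (a b : Fin n → ℕ) (k : Fin n)
    (hk : a k < b k) (h : ∀ ℓ : Fin n, ℓ < k → a ℓ ≤ b ℓ) :
    toLex a < toLex b := by
  have hS : (fun ℓ : Fin n => a ℓ ≠ b ℓ) k := hk.ne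
  obtain ⟨m, hm, hmin⟩ := (IsWellFounded.wf (r := ((· < ·) : Fin n → Fin n → Prop))).has_min
    {ℓ | a ℓ ≠ b ℓ} ⟨k, hS⟩
  have hmk : m ≤ k := not_lt.1 fun hlt => hmin k hS hlt
  refine ⟨m, fun j hj => ?_, ?_⟩
  · by_contra hne
    exact hmin j hne hj
  · rcases eq_or_lt_of_le hmk with rfl | hmk'
    · exact hk
    · exact lt_of_le_of_ne (h m hmk') hm

/-- Well-foundedness of the template for well-founded predicate variables:
any instantiation of `T_X^↓` denotes a well-founded relation (no infinite
descending chain). -/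
theorem wf_template_wellfounded
    {α : Type*} (np nl : ℕ)
    (r : Fin np → Fin nl → α → ℤ)
    (D : Fin np → α → Prop) :
    ¬ ∃ x : ℕ → α, ∀ n : ℕ, TemplateWF r D (x n) (x (n + 1)) := by
  rintro ⟨x, hx⟩
  have hnn : ∀ n i k, 0 ≤ r i k (x n) := fun n i k => (hx n).1 i k
  choose i hDi hDEC using fun n => (hx n).2.2.2
  have hdec : ∀ n, DEC r (i n) (i (n + 1)) (x n) (x (n + 1)) :=
    fun n => hDEC n (i (n + 1)) (hDi (n + 1))
  set g : ℕ → Lex (Fin nl → ℕ) :=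
    fun n => toLex fun k => (r (i n) k (x n)).toNat with hg
  have hlt : ∀ n, g (n + 1) < g n := by
    intro n
    obtain ⟨k, hk, hle⟩ := hdec n
    refine lex_lt_of_lt_of_le _ _ k ?_ ?_
    · have h1 := hnn n (i n) k
      have h2 := hnn (n + 1) (i (n + 1)) k
      omega
    · intro ℓ hℓ
      have h1 := hnn n (i n) ℓ
      have h2 := hnn (n + 1) (i (n + 1)) ℓ
      have := hle ℓ hℓ
      omega
  exact RelEmbedding.not_wellFounded
    (RelEmbedding.natGT g hlt) IsWellFounded.wf
end

section
/- Well-foundedness of the refined template for well-founded predicate variables (Appendix H): Let α be a type, np, nl ∈ ℕ, r : Fin np → Fin nl → α → ℤ a family of ranking functions, and D : Fin np → α → Prop a family of discriminators. Define DEC'(i, j, x, y) := ∃ k : Fin nl, r(i, k)(x) ≥ 0 ∧ r(i, k)(x) > r(j, k)(y) ∧ ∀ ℓ < k, ((r(i, ℓ)(x) < 0 ∧ r(j, ℓ)(y) < 0) ∨ r(i, ℓ)(x) ≥ r(j, ℓ)(y)), and define W'(x, y) := (∃ j, D(j)(y)) ∧ (∃ i, D(i)(x) ∧ ∀ j, D(j)(y)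 → DEC'(i, j, x, y)). Then there is no infinite sequence x_0, x_1, … in α with W'(x_n, x_{n+1}) for all n ≥ 0. -/
/-- `DEC' i j x y`: the refined lexicographic decrease condition of the
template of Appendix H. -/
def DEC' {α : Type*} {np nl : ℕ} (r : Fin np → Fin nl → α → ℤ)
    (i j : Fin np) (x y : α) : Prop :=
  ∃ k : Fin nl, r i k x ≥ 0 ∧ r i k x > r j k y ∧
    ∀ ℓ : Fin nl, ℓ < k →
      ((r i ℓ x < 0 ∧ r j ℓ y < 0) ∨ r i ℓ x ≥ r j ℓ y)

/-- The relation denoted by the refined stratified template family `T_X^↓`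
for well-founded predicate variables (Appendix H of the paper). -/
def TemplateWF' {α : Type*} {np nl : ℕ} (r : Fin np → Fin nl → α → ℤ)
    (D : Fin np → α → Prop) (x y : α) : Prop :=
  (∃ j, D j y) ∧
  (∃ i, D i x ∧ ∀ j, D j y → DEC' r i j x y)

private lemma no_descending {β : Type*} {rel : β → β → Prop} (hw : WellFounded rel)
    (f : ℕ → β) (h : ∀ n, rel (f (n + 1)) (f n)) : False := by
  have H : ∀ b, ∀ n, f n = b → False := by
    intro b
    induction b using WellFounded.induction hw with
    | _ b ih =>
      intro n hn
      exact ih (f (n + 1)) (hn ▸ h n) (n + 1) rfl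
  exact H (f 0) 0 rfl

/-- Well-foundedness of the refined template for well-founded predicate
variables: any instantiation still denotes a well-founded relation (no
infinite descending chain). -/
theorem wf_refined_template_wellfounded
    {α : Type*} (np nl : ℕ)
    (r : Fin np → Fin nl → α → ℤ)
    (D : Fin np → α → Prop) :
    ¬ ∃ x : ℕ → α, ∀ n : ℕ, TemplateWF' r D (x n) (x (n + 1)) := by
  rintro ⟨x, hx⟩
  -- choose discriminator indices
  choose i hDi hdec using fun n => (hx n).2
  have hdec' : ∀ n, DEC' r (i n) (i (n + 1)) (x n) (x (n + 1)) :=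
    fun n => hdec n (i (n + 1)) (hDi (n + 1))
  -- truncated ranks as naturals
  set h : ℕ → Fin nl → ℕ := fun n ℓ => (r (i n) ℓ (x n) + 1).toNat with hh
  have key : ∀ n, Pi.Lex (· < ·) (fun {_} => (· < ·)) (h (n + 1)) (h n) := by
    intro n
    obtain ⟨k, hk0, hklt, hpre⟩ := hdec' n
    -- h (n+1) k < h n k
    have hstrict : h (n + 1) k < h n k := by
      simp only [hh]
      have h1 : r (i (n + 1)) k (x (n + 1)) + 1 ≤ r (i n) k (x n) := by omega
      omega
    -- h n ℓ ≥ h (n+1) ℓ for ℓ < k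
    have hle : ∀ ℓ, ℓ < k → h (n + 1) ℓ ≤ h n ℓ := by
      intro ℓ hℓ
      rcases hpre ℓ hℓ with ⟨ha, hb⟩ | hge <;> simp only [hh] <;> omega
    -- take minimal index where they differ
    have hne : k ∈ {ℓ : Fin nl | h (n + 1) ℓ ≠ h n ℓ} := fun e => absurd e (Nat.ne_of_lt hstrict)
    obtain ⟨k', hk'mem, hk'min⟩ :=
      (Finite.wellFounded_of_trans_of_irrefl (α := Fin nl) (· < ·)).has_min
        {ℓ : Fin nl | h (n + 1) ℓ ≠ h n ℓ} ⟨k, hne⟩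
    refine ⟨k', fun j hj => ?_, ?_⟩
    · by_contra hne'
      exact hk'min j hne' hj
    · have hk'k : k' ≤ k := by
        by_contra hgt
        exact hk'min k hne (lt_of_not_ge hgt)
      rcases lt_or_eq_of_le hk'k with hlt | heq
      · exact lt_of_le_of_ne (hle k' hlt) hk'mem
      · rw [heq]; exact hstrict
  haveI : IsStrictTotalOrder (Fin nl) (fun x1 x2 : Fin nl => x1 < x2) :=
    { trichotomous := fun a b h1 h2 => le_antisymm (not_lt.mp h2) (not_lt.mp h1),
      irrefl := fun a => lt_irrefl a,
      trans := fun _ _ _ => lt_trans }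
  exact no_descending
    (Pi.Lex.wellFounded (· < ·) (fun _ : Fin nl => (Nat.lt_wfRel).wf)) h key
end

section
/- No finite unsatisfiability witness in the presence of a well-founded predicate variable (witnessing the paper's claim in Appendix F): (a) There is no relation W on ℤ such that W(n, n+1) holds for every n ∈ ℤ and W admits no infinite sequence v : ℕ → ℤ with W(v(j), v(j+1)) for all j ≥ 0; (b) yet for every finite set S ⊆ ℤ there exists a relation W on ℤ with W(n, n+1) for every n ∈ S that admits no infinite sequence v : ℕ → ℤ with W(v(j), v(j+1)) for all j ≥ 0. -/
/-- No finite unsatisfiability witness in the presence of a well-founded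
predicate variable (Appendix F): (a) no well-founded relation on ℤ contains
all successor pairs, yet (b) for every finite set of successor pairs there is
a well-founded relation containing them. -/
theorem no_finite_unsat_witness_for_wf :
    (¬ ∃ W : ℤ → ℤ → Prop, (∀ n : ℤ, W n (n + 1)) ∧ NoInfChain W) ∧
    (∀ S : Finset ℤ, ∃ W : ℤ → ℤ → Prop,
      (∀ n ∈ S, W n (n + 1)) ∧ NoInfChain W) := by
  constructor
  · rintro ⟨W, hall, hwf⟩
    exact hwf ⟨fun j => (j : ℤ), fun j => by push_cast; exact hall j⟩
  · intro S
    refine ⟨fun a b => a ∈ S ∧ b = a + 1, fun n hn => ⟨hn, rfl⟩, ?_⟩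
    rintro ⟨v, hv⟩
    have hinj : Function.Injective v := by
      have hstep : ∀ j, v (j + 1) = v j + 1 := fun j => (hv j).2
      have hval : ∀ j, v j = v 0 + j := by
        intro j
        induction j with
        | zero => simp
        | succ k ih => rw [hstep k, ih]; push_cast; ring
      intro a b hab
      have : (a : ℤ) = b := by
        have := hval a ▸ hab; rw [hval b] at this; omega
      exact_mod_cast this
    have : (↑S : Set ℤ).Infinite :=
      Set.infinite_of_injective_forall_mem hinj (fun j => (hv j).1)
    exact this S.finite_toSet
end
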